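/- arXiv:2003.14182 — 7 statements merged into one kernel-verified Lean document; each statement's English description precedes it below -/
import Mathlib

section
/- Let K and E be full-dimensional convex bodies in ℝⁿ and let −r(K;E) < λ₀ < λ₁ < ∞. Then K_{λ₀} is homothetic to K_{λ₁} if and only if K_{λ₁} is homothetic to a tangential body of E. -/
open scoped Pointwise RealInnerProductSpace
open Metric MeasureTheory

/-- Euclidean n-space. -/
abbrev Eucl (n : ℕ) := EuclideanSpace ℝ (Fin n)

/-- Support function h_K(u) = sup {⟨x,u⟩ : x ∈ K}. -/
noncomputable def suppFn {n : ℕ} (K : Set (Eucl n)) (u : Eucl n) : ℝ :=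
  sSup ((fun x => (inner ℝ x u : ℝ)) '' K)

/-- Closed halfspace H⁻_{u,α} = {x : ⟨x,u⟩ ≤ α}. -/
def halfspace {n : ℕ} (u : Eucl n) (α : ℝ) : Set (Eucl n) := {x | (inner ℝ x u : ℝ) ≤ α}

/-- Minkowski difference M ∼ N = {x : N + x ⊆ M}. -/
def mdiff {n : ℕ} (M N : Set (Eucl n)) : Set (Eucl n) := {x | N + {x} ⊆ M}

/-- Relative inradius r(K;E) = sup {r ≥ 0 : ∃ x, x + r•E ⊆ K}. -/
noncomputable def inradius {n : ℕ} (K E : Set (Eucl n)) : ℝ :=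
  sSup {r : ℝ | 0 ≤ r ∧ ∃ x : Eucl n, r • E + {x} ⊆ K}

/-- Inner (λ ≤ 0) and outer (λ ≥ 0) parallel bodies K_λ of K relative to E. -/
noncomputable def parallelBody {n : ℕ} (K E : Set (Eucl n)) (l : ℝ) : Set (Eucl n) :=
  if l ≤ 0 then mdiff K (|l| • E) else K + l • E

/-- A is homothetic to B: A = α•B + x for some α > 0 and x. -/
def Homothetic {n : ℕ} (A B : Set (Eucl n)) : Prop :=
  ∃ α : ℝ, 0 < α ∧ ∃ x : Eucl n, A = α • B + {x}

/-- The hyperplane {x : ⟨x,u⟩ = α} supports M: it meets M and M lies in one of the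
two closed halfspaces bounded by it. -/
def SupportsHyp {n : ℕ} (u : Eucl n) (α : ℝ) (M : Set (Eucl n)) : Prop :=
  (M ∩ {x | (inner ℝ x u : ℝ) = α}).Nonempty ∧
    (M ⊆ {x | (inner ℝ x u : ℝ) ≤ α} ∨ M ⊆ {x | α ≤ (inner ℝ x u : ℝ)})

/-- K is a tangential body of E: E ⊆ K and through every boundary point of K there is a
supporting hyperplane of K that also supports E. -/
def IsTangentialBody {n : ℕ} (K E : Set (Eucl n)) : Prop :=
  E ⊆ K ∧ ∀ p ∈ frontier K, ∃ u : Eucl n, u ≠ 0 ∧ ∃ α : ℝ,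
    (inner ℝ p u : ℝ) = α ∧ SupportsHyp u α K ∧ SupportsHyp u α E

/-- Ω determines K: K is the intersection of the halfspaces with normals in Ω at heights h_K. -/
def Determines {n : ℕ} (Ω K : Set (Eucl n)) : Prop :=
  K = ⋂ u ∈ Ω, halfspace u (suppFn K u)

/-- The Wulff shape K(Ω,λ) = ⋂_{u ∈ Ω} H⁻_{u, h_K(u) + λ h_E(u)}. -/
noncomputable def wulff {n : ℕ} (K E Ω : Set (Eucl n)) (l : ℝ) : Set (Eucl n) :=
  ⋂ u ∈ Ω, halfspace u (suppFn K u + l * suppFn E u)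

/-- E^Ω = ⋂_{u ∈ Ω} H⁻_{u, h_E(u)}. -/
noncomputable def tangBody {n : ℕ} (E Ω : Set (Eucl n)) : Set (Eucl n) :=
  ⋂ u ∈ Ω, halfspace u (suppFn E u)

section Aux
variable {n : ℕ}

lemma mem_mdiff {M N : Set (Eucl n)} {x : Eucl n} : x ∈ mdiff M N ↔ ∀ b ∈ N, b + x ∈ M := by
  constructor
  · intro h b hb
    exact h ⟨b, hb, x, rfl, rfl⟩
  · rintro h y ⟨b, hb, x', (rfl : x' = x), rfl⟩
    exact h b hb

lemma mem_add_singleton' {A : Set (Eucl n)} {y x : Eucl n} : x ∈ A + {y} ↔ x - y ∈ A := by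
  rw [Set.add_singleton]
  constructor
  · rintro ⟨a, ha, rfl⟩
    simpa using ha
  · intro h
    exact ⟨x - y, h, by module⟩

lemma mdiff_mdiff (A B C : Set (Eucl n)) : mdiff (mdiff A B) C = mdiff A (B + C) := by
  ext x
  simp only [mem_mdiff, Set.mem_add]
  constructor
  · rintro h y ⟨b, hb, c, hc, rfl⟩
    have := h c hc b hb
    rwa [← add_assoc] at this
  · intro h c hc b hb
    have := h (b + c) ⟨b, hb, c, hc, rfl⟩
    rwa [add_assoc] at this

lemma mdiff_translate (A B : Set (Eucl n)) (y : Eucl n) :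
    mdiff (A + {y}) B = mdiff A B + {y} := by
  ext x
  rw [mem_add_singleton', mem_mdiff, mem_mdiff]
  constructor
  · intro h b hb
    have := mem_add_singleton'.mp (h b hb)
    rwa [show b + x - y = b + (x - y) by abel] at this
  · intro h b hb
    rw [mem_add_singleton']
    have := h b hb
    rwa [show b + (x - y) = b + x - y by abel] at this

lemma mdiff_smul_smul (A B : Set (Eucl n)) {β : ℝ} (hβ : β ≠ 0) :
    mdiff (β • A) (β • B) = β • mdiff A B := by
  ext x
  rw [Set.mem_smul_set_iff_inv_smul_mem₀ hβ, mem_mdiff, mem_mdiff]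
  constructor
  · intro h b hb
    have := h (β • b) ⟨b, hb, rfl⟩
    rw [Set.mem_smul_set_iff_inv_smul_mem₀ hβ] at this
    rwa [smul_add, smul_smul, inv_mul_cancel₀ hβ, one_smul] at this
  · rintro h b' ⟨b, hb, rfl⟩
    rw [Set.mem_smul_set_iff_inv_smul_mem₀ hβ]
    have := h b hb
    rwa [smul_add, smul_smul, inv_mul_cancel₀ hβ, one_smul]

lemma mdiff_add_cancel {A B : Set (Eucl n)} (hA : IsCompact A) (hAc : Convex ℝ A)
    (hB : IsCompact B) (hBne : B.Nonempty) : mdiff (A + B) B = A := by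
  rcases A.eq_empty_or_nonempty with rfl | hAne
  · ext x
    simp only [mem_mdiff, Set.empty_add, Set.mem_empty_iff_false]
    obtain ⟨b, hb⟩ := hBne
    exact ⟨fun h => h b hb, False.elim⟩
  · apply Set.eq_of_subset_of_subset
    · intro z hz
      rw [mem_mdiff] at hz
      by_contra hzA
      obtain ⟨f, u, hfu, huz⟩ := geometric_hahn_banach_closed_point hAc hA.isClosed hzA
      obtain ⟨b₀, hb₀, hbmax⟩ := hB.exists_isMaxOn hBne (f.continuous.continuousOn)
      rcases hz b₀ hb₀ with ⟨a, ha, b, hb, hab⟩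
      have h1 : f a + f b = f b₀ + f z := by
        rw [← map_add, ← map_add]
        exact congrArg f hab
      have h2 : f b ≤ f b₀ := hbmax hb
      have h3 : f a < u := hfu a ha
      linarith
    · intro a ha
      rw [mem_mdiff]
      intro b hb
      exact ⟨a, ha, b, hb, add_comm a b⟩

lemma interior_lt_of_subset_halfspace {T : Set (Eucl n)} {u : Eucl n} {α : ℝ} (hu : u ≠ 0)
    (hT : T ⊆ {x | (inner ℝ x u : ℝ) ≤ α}) {z : Eucl n} (hz : z ∈ interior T) :
    (inner ℝ z u : ℝ) < α := by
  obtain ⟨ε, hε, hball⟩ := Metric.isOpen_iff.mp isOpen_interior z hz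
  have hun : (0:ℝ) < ‖u‖ := norm_pos_iff.mpr hu
  set w := z + (ε / 2) • (‖u‖⁻¹ • u) with hw
  have hwball : w ∈ ball z ε := by
    rw [mem_ball, dist_eq_norm]
    have : w - z = (ε / 2) • (‖u‖⁻¹ • u) := by rw [hw]; abel
    rw [this, norm_smul, norm_smul, norm_inv, norm_norm, Real.norm_eq_abs,
      abs_of_pos (by linarith : (0:ℝ) < ε / 2)]
    rw [inv_mul_cancel₀ (ne_of_gt hun), mul_one]
    linarith
  have hwT : w ∈ T := interior_subset (hball hwball)
  have hineq : (inner ℝ w u : ℝ) ≤ α := hT hwT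
  have hcalc : (inner ℝ w u : ℝ) = (inner ℝ z u : ℝ) + (ε / 2) * ‖u‖ := by
    rw [hw, inner_add_left, real_inner_smul_left, real_inner_smul_left,
      real_inner_self_eq_norm_sq]
    field_simp
  nlinarith

lemma segment_frontier {T : Set (Eucl n)} (hTcl : IsClosed T) (hTc : Convex ℝ T)
    {z y : Eucl n} (hz : z ∈ interior T) (hy : y ∉ T) :
    ∃ t : ℝ, 0 < t ∧ t < 1 ∧ z + t • (y - z) ∈ frontier T := by
  classical
  set g : ℝ → Eucl n := fun t => z + t • (y - z) with hg
  have hgc : Continuous g := by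
    apply continuous_const.add
    exact continuous_id.smul continuous_const
  set S : Set ℝ := Set.Icc (0:ℝ) 1 ∩ g ⁻¹' T with hS
  have hScl : IsClosed S := isClosed_Icc.inter (hTcl.preimage hgc)
  have hS0 : (0:ℝ) ∈ S := by
    constructor
    · exact ⟨le_refl 0, zero_le_one⟩
    · show g 0 ∈ T
      simp [hg]
      exact interior_subset hz
  have hSbdd : BddAbove S := BddAbove.mono (Set.inter_subset_left) (bddAbove_Icc)
  set t := sSup S with ht
  have htS : t ∈ S := hScl.csSup_mem ⟨0, hS0⟩ hSbdd
  have ht0 : 0 ≤ t := htS.1.1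
  have ht1 : t ≤ 1 := htS.1.2
  have hgtT : g t ∈ T := htS.2
  have htne1 : t ≠ 1 := by
    intro h
    apply hy
    have : g 1 = y := by simp [hg]
    rw [h] at hgtT
    rwa [this] at hgtT
  have ht1' : t < 1 := lt_of_le_of_ne ht1 htne1
  have hgtnotint : g t ∉ interior T := by
    intro hint
    obtain ⟨ε, hε, hball⟩ := Metric.isOpen_iff.mp isOpen_interior (g t) hint
    -- find t' > t still in S
    have hcont : ContinuousAt g t := hgc.continuousAt
    rw [Metric.continuousAt_iff] at hcont
    obtain ⟨δ, hδ, hδball⟩ := hcont ε hε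
    set t' := min (t + δ / 2) 1 with ht'
    have htt' : t < t' := by
      apply lt_min (by linarith) ht1'
    have ht'le : t' ≤ t + δ / 2 := min_le_left _ _
    have hd : dist t' t < δ := by
      rw [Real.dist_eq, abs_of_pos (by linarith : (0:ℝ) < t' - t)]
      linarith
    have : g t' ∈ T := interior_subset (hball (hδball hd))
    have ht'S : t' ∈ S := ⟨⟨by linarith, min_le_right _ _⟩, this⟩
    have : t' ≤ t := le_csSup hSbdd ht'S
    linarith
  have htpos : 0 < t := by
    rcases eq_or_lt_of_le ht0 with h | h
    · exfalso
      apply hgtnotint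
      have hgz : g t = z := by rw [← h]; simp [hg]
      rw [hgz]
      exact hz
    · exact h
  refine ⟨t, htpos, ht1', ?_, hgtnotint⟩
  exact subset_closure hgtT

lemma hyperplane_int_empty {u : Eucl n} (hu : u ≠ 0) (α : ℝ) :
    interior {x : Eucl n | (inner ℝ x u : ℝ) = α} = ∅ := by
  by_contra h
  obtain ⟨z, hz⟩ := Set.nonempty_iff_ne_empty.mpr h
  have h1 : (inner ℝ z u : ℝ) < α := by
    apply interior_lt_of_subset_halfspace hu _ hz
    · intro x hx
      exact le_of_eq hx
  have h2 := interior_subset hz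
  simp only [Set.mem_setOf_eq] at h2
  linarith

/-- Separation using tangential hyperplanes. -/
lemma tang_sep {T E : Set (Eucl n)} (hTcl : IsClosed T) (hTc : Convex ℝ T)
    (hTi : (interior T).Nonempty) (hEi : (interior E).Nonempty)
    (htb : IsTangentialBody T E) {y : Eucl n} (hy : y ∉ T) :
    ∃ u : Eucl n, ∃ α : ℝ, u ≠ 0 ∧ α < (inner ℝ y u : ℝ) ∧ (∀ t ∈ T, (inner ℝ t u : ℝ) ≤ α) ∧
      (∃ e ∈ E, (inner ℝ e u : ℝ) = α) ∧ (∀ e ∈ E, (inner ℝ e u : ℝ) ≤ α) := by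
  obtain ⟨z, hz⟩ := hTi
  obtain ⟨t, ht0, ht1, htf⟩ := segment_frontier hTcl hTc hz hy
  set p := z + t • (y - z) with hp
  obtain ⟨u₀, hu₀, α₀, hpα₀, hsT₀, hsE₀⟩ := htb.2 p htf
  -- orient so that T is on the ≤ side
  have key : ∃ u : Eucl n, ∃ α : ℝ, u ≠ 0 ∧ (inner ℝ p u : ℝ) = α ∧
      T ⊆ {x | (inner ℝ x u : ℝ) ≤ α} ∧ (E ∩ {x | (inner ℝ x u : ℝ) = α}).Nonempty ∧
      (E ⊆ {x | (inner ℝ x u : ℝ) ≤ α} ∨ E ⊆ {x | α ≤ (inner ℝ x u : ℝ)}) := by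
    rcases hsT₀.2 with hside | hside
    · exact ⟨u₀, α₀, hu₀, hpα₀, hside, hsE₀.1, hsE₀.2⟩
    · refine ⟨-u₀, -α₀, neg_ne_zero.mpr hu₀, ?_, ?_, ?_, ?_⟩
      · rw [inner_neg_right, hpα₀]
      · intro x hx
        have := hside hx
        simp only [Set.mem_setOf_eq, inner_neg_right] at *
        linarith
      · obtain ⟨e, he, heq⟩ := hsE₀.1
        exact ⟨e, he, by simp only [Set.mem_setOf_eq, inner_neg_right] at *; linarith⟩
      · rcases hsE₀.2 with h | h
        · right; intro x hx; have := h hx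
          simp only [Set.mem_setOf_eq, inner_neg_right] at *; linarith
        · left; intro x hx; have := h hx
          simp only [Set.mem_setOf_eq, inner_neg_right] at *; linarith
  obtain ⟨u, α, hu, hpα, hTside, hEmeet, hEor⟩ := key
  -- E must be on the ≤ side
  have hEle : ∀ e ∈ E, (inner ℝ e u : ℝ) ≤ α := by
    rcases hEor with h | h
    · exact fun e he => h he
    · exfalso
      have hsub : E ⊆ {x : Eucl n | (inner ℝ x u : ℝ) = α} := by
        intro e he
        have h1 : α ≤ (inner ℝ e u : ℝ) := h he
        have h2 : (inner ℝ e u : ℝ) ≤ α := hTside (htb.1 he)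
        exact le_antisymm h2 h1
      obtain ⟨e, he⟩ := hEi
      have : e ∈ interior {x : Eucl n | (inner ℝ x u : ℝ) = α} :=
        interior_mono hsub he
      rw [hyperplane_int_empty hu α] at this
      exact this
  -- α < ⟨y, u⟩
  have hza : (inner ℝ z u : ℝ) < α := interior_lt_of_subset_halfspace hu hTside hz
  have hpval : (inner ℝ p u : ℝ) = (inner ℝ z u : ℝ) + t * ((inner ℝ y u : ℝ) - (inner ℝ z u : ℝ)) := by
    rw [hp, inner_add_left, real_inner_smul_left, inner_sub_left]
  have hy_gt : α < (inner ℝ y u : ℝ) := by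
    rw [hpα] at hpval
    nlinarith
  exact ⟨u, α, hu, hy_gt, fun x hx => hTside hx, hEmeet, hEle⟩

end Aux

section Aux2
variable {n : ℕ}

/-- No copy of `E` with ratio larger than 1 fits inside a tangential body of `E`. -/
lemma tang_no_big {T E : Set (Eucl n)} (hT : IsCompact T) (hTc : Convex ℝ T)
    (hTi : (interior T).Nonempty) (hEi : (interior E).Nonempty)
    (hE2 : ∃ e₁ ∈ E, ∃ e₂ ∈ E, e₁ ≠ e₂)
    (htb : IsTangentialBody T E) {x : Eucl n} {σ : ℝ} (hσ : 1 < σ)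
    (hsub : ∀ e ∈ E, x + σ • e ∈ T) : False := by
  have hstep : ∀ e ∈ E, ∀ t ∈ T, t + (x + (σ - 1) • e) ∈ T := by
    intro e he t ht
    by_contra hnot
    obtain ⟨u, α, hu, hαy, hTle, ⟨e₀, he₀, he₀α⟩, hEle⟩ :=
      tang_sep hT.isClosed hTc hTi hEi htb hnot
    have h1 : (inner ℝ (x + σ • e₀) u : ℝ) ≤ α := hTle _ (hsub e₀ he₀)
    rw [inner_add_left, real_inner_smul_left, he₀α] at h1
    have h2 : (inner ℝ t u : ℝ) ≤ α := hTle t ht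
    have h3 : (inner ℝ e u : ℝ) ≤ α := hEle e he
    have h4 : (inner ℝ (t + (x + (σ - 1) • e)) u : ℝ) =
        (inner ℝ t u : ℝ) + (inner ℝ x u : ℝ) + (σ - 1) * (inner ℝ e u : ℝ) := by
      rw [inner_add_left, inner_add_left, real_inner_smul_left]; ring
    have h5 : (σ - 1) * (inner ℝ e u : ℝ) ≤ (σ - 1) * α :=
      mul_le_mul_of_nonneg_left h3 (by linarith)
    have := hαy
    nlinarith
  obtain ⟨e₁, he₁, e₂, he₂, hne⟩ := hE2
  obtain ⟨t₀, ht₀⟩ : T.Nonempty := hTi.mono interior_subset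
  have hiter : ∀ (e : Eucl n), e ∈ E → ∀ k : ℕ, t₀ + (k : ℝ) • (x + (σ - 1) • e) ∈ T := by
    intro e he k
    induction k with
    | zero => simpa using ht₀
    | succ m ih =>
        have := hstep e he _ ih
        have heq : t₀ + (m : ℝ) • (x + (σ - 1) • e) + (x + (σ - 1) • e)
            = t₀ + ((m + 1 : ℕ) : ℝ) • (x + (σ - 1) • e) := by
          push_cast
          module
        rwa [heq] at this
  have hzero : ∀ (e : Eucl n), e ∈ E → x + (σ - 1) • e = 0 := by
    intro e he
    by_contra hv
    obtain ⟨r, hr⟩ := hT.isBounded.subset_closedBall 0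
    set v := x + (σ - 1) • e with hvdef
    have hvn : (0:ℝ) < ‖v‖ := norm_pos_iff.mpr hv
    obtain ⟨k, hk⟩ := exists_nat_gt ((r + ‖t₀‖) / ‖v‖)
    have hmem := hiter e he k
    have hle : ‖t₀ + (k : ℝ) • v‖ ≤ r := by
      have h0 := hr hmem
      rw [Metric.mem_closedBall, dist_eq_norm, sub_zero] at h0
      exact h0
    have hge : (k : ℝ) * ‖v‖ - ‖t₀‖ ≤ ‖t₀ + (k : ℝ) • v‖ := by
      have h1 : ‖(k : ℝ) • v‖ - ‖t₀‖ ≤ ‖t₀ + (k : ℝ) • v‖ := by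
        have h2 := norm_sub_le (t₀ + (k : ℝ) • v) t₀
        have h3 : t₀ + (k : ℝ) • v - t₀ = (k : ℝ) • v := by abel
        rw [h3] at h2
        linarith
      rwa [norm_smul, Real.norm_natCast] at h1
    have : (r + ‖t₀‖) / ‖v‖ * ‖v‖ < (k : ℝ) * ‖v‖ :=
      (mul_lt_mul_of_pos_right hk hvn)
    rw [div_mul_cancel₀ _ (ne_of_gt hvn)] at this
    linarith
  have h1 := hzero e₁ he₁
  have h2 := hzero e₂ he₂
  have h3 : (σ - 1) • e₁ = (σ - 1) • e₂ := by
    have h12 := h1.trans h2.symm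
    exact add_left_cancel h12
  have hσ1 : σ - 1 ≠ 0 := by intro h; linarith
  exact hne (smul_right_injective (Eucl n) hσ1 h3)

end Aux2

section Aux3
variable {n : ℕ}

lemma tang_mdiff {T E : Set (Eucl n)} (hT : IsCompact T) (hTc : Convex ℝ T)
    (hTi : (interior T).Nonempty) (hEi : (interior E).Nonempty)
    (htb : IsTangentialBody T E) {s : ℝ} (hs0 : 0 ≤ s) (hs1 : s < 1) :
    mdiff T (s • E) = (1 - s) • T := by
  have hs1' : (0:ℝ) < 1 - s := by linarith
  apply Set.eq_of_subset_of_subset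
  · intro w hw
    rw [Set.mem_smul_set_iff_inv_smul_mem₀ (ne_of_gt hs1')]
    by_contra hnot
    obtain ⟨u, α, hu, hαy, hTle, ⟨e₀, he₀, he₀α⟩, hEle⟩ :=
      tang_sep hT.isClosed hTc hTi hEi htb hnot
    have h1 : s • e₀ + w ∈ T := mem_mdiff.mp hw (s • e₀) ⟨e₀, he₀, rfl⟩
    have h2 := hTle _ h1
    rw [inner_add_left, real_inner_smul_left, he₀α] at h2
    rw [real_inner_smul_left] at hαy
    have h3 : (1 - s) * α < (1 - s) * ((1 - s)⁻¹ * (inner ℝ w u : ℝ)) :=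
      mul_lt_mul_of_pos_left hαy hs1'
    rw [← mul_assoc, mul_inv_cancel₀ (ne_of_gt hs1'), one_mul] at h3
    nlinarith
  · rintro w ⟨t, ht, rfl⟩
    rw [mem_mdiff]
    rintro b ⟨e, he, rfl⟩
    exact hTc (htb.1 he) ht hs0 (le_of_lt hs1') (by ring)

lemma smul_set_assoc (a b : ℝ) (S : Set (Eucl n)) : a • (b • S) = (a * b) • S := by
  ext x
  simp only [Set.mem_smul_set]
  constructor
  · rintro ⟨y, ⟨z, hz, rfl⟩, rfl⟩
    exact ⟨z, hz, (smul_smul a b z).symm⟩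
  · rintro ⟨z, hz, rfl⟩
    exact ⟨b • z, ⟨z, hz, rfl⟩, smul_smul a b z⟩

lemma smul_set_add_dist (a : ℝ) (S U : Set (Eucl n)) : a • (S + U) = a • S + a • U := by
  ext x
  simp only [Set.mem_smul_set, Set.mem_add]
  constructor
  · rintro ⟨y, ⟨u, hu, v, hv, rfl⟩, rfl⟩
    exact ⟨a • u, ⟨u, hu, rfl⟩, a • v, ⟨v, hv, rfl⟩, (smul_add a u v).symm⟩
  · rintro ⟨y, ⟨u, hu, rfl⟩, z, ⟨v, hv, rfl⟩, rfl⟩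
    exact ⟨u + v, ⟨u, hu, v, hv, rfl⟩, smul_add a u v⟩

/-- Backward direction core. -/
lemma backward_core {T E : Set (Eucl n)} (hT : IsCompact T) (hTc : Convex ℝ T)
    (hTi : (interior T).Nonempty) (hE : IsCompact E) (hEi : (interior E).Nonempty)
    (hE2 : ∃ e₁ ∈ E, ∃ e₂ ∈ E, e₁ ≠ e₂) (htb : IsTangentialBody T E)
    {β : ℝ} (hβ : 0 < β) {y : Eucl n} {L : Set (Eucl n)} (hL : L = β • T + {y})
    {δ : ℝ} (hδ : 0 < δ) (hint : (interior (mdiff L (δ • E))).Nonempty) :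
    Homothetic (mdiff L (δ • E)) L := by
  set s := δ / β with hs
  have hspos : 0 < s := div_pos hδ hβ
  have hβs : β * s = δ := by rw [hs]; field_simp
  clear_value s
  clear hs
  have hkey : mdiff L (δ • E) = β • mdiff T (s • E) + {y} := by
    rw [hL, mdiff_translate, ← mdiff_smul_smul T (s • E) (ne_of_gt hβ)]
    congr 2
    rw [smul_set_assoc, hβs]
  -- rule out s ≥ 1
  have hslt : s < 1 := by
    by_contra hge
    push_neg at hge
    obtain ⟨w, hw⟩ := hint
    obtain ⟨ε, hε, hball⟩ := Metric.isOpen_iff.mp isOpen_interior w hw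
    obtain ⟨e₀, he₀⟩ : E.Nonempty := hEi.mono interior_subset
    obtain ⟨R, hR⟩ := hE.isBounded.subset_closedBall 0
    have hR0 : 0 ≤ R := by
      have := hR he₀
      rw [Metric.mem_closedBall, dist_zero_right] at this
      exact le_trans (norm_nonneg _) this
    set t : ℝ := ε / (β * (2 * R + 1)) with htdef
    have hden : 0 < β * (2 * R + 1) := by positivity
    have ht : 0 < t := div_pos hε hden
    have ht2 : β * (t * (2 * R + 1)) = ε := by
      rw [htdef]; field_simp
    clear_value t
    clear htdef
    have hmem : ∀ e ∈ E, (β⁻¹ • (w - y) - t • e₀) + (s + t) • e ∈ T := by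
      intro e he
      have hv : ‖β • (t • (e - e₀))‖ < ε := by
        rw [norm_smul, norm_smul, Real.norm_eq_abs, Real.norm_eq_abs,
          abs_of_pos hβ, abs_of_pos ht]
        have hee : ‖e - e₀‖ ≤ 2 * R := by
          have h1 := hR he
          have h2 := hR he₀
          rw [Metric.mem_closedBall, dist_zero_right] at h1 h2
          calc ‖e - e₀‖ ≤ ‖e‖ + ‖e₀‖ := norm_sub_le e e₀
            _ ≤ 2 * R := by linarith
        have hstep : β * (t * ‖e - e₀‖) ≤ β * (t * (2 * R)) := by
          apply mul_le_mul_of_nonneg_left _ (le_of_lt hβ)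
          exact mul_le_mul_of_nonneg_left hee (le_of_lt ht)
        nlinarith
      have hwball : w + β • (t • (e - e₀)) ∈ ball w ε := by
        rw [mem_ball, dist_eq_norm]
        simpa using hv
      have hmem2 : w + β • (t • (e - e₀)) ∈ mdiff L (δ • E) :=
        interior_subset (hball hwball)
      have hmem3 : δ • e + (w + β • (t • (e - e₀))) ∈ L :=
        mem_mdiff.mp hmem2 (δ • e) ⟨e, he, rfl⟩
      rw [hL] at hmem3
      rcases hmem3 with ⟨a, ⟨tt, htt, rfl⟩, b, hb, habv⟩
      rw [Set.mem_singleton_iff] at hb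
      have hβ' : (β:ℝ) ≠ 0 := ne_of_gt hβ
      have habv' : β • tt + y = δ • e + (w + β • (t • (e - e₀))) := by
        rw [← hb]; exact habv
      have h5 : β • tt = δ • e + (w + β • (t • (e - e₀))) - y := by
        linear_combination (norm := module) habv'
      have h6 : tt = β⁻¹ • (δ • e + (w + β • (t • (e - e₀))) - y) := by
        rw [← h5, smul_smul, inv_mul_cancel₀ hβ', one_smul]
      have h7 : tt = (β⁻¹ • (w - y) - t • e₀) + (s + t) • e := by
        rw [h6, ← hβs]
        match_scalars <;> field_simp <;> ring <;> ring
      rw [← h7]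
      exact htt
    exact tang_no_big hT hTc hTi hEi hE2 htb (by linarith : 1 < s + t) hmem
  -- now s < 1
  have hmd : mdiff T (s • E) = (1 - s) • T :=
    tang_mdiff hT hTc hTi hEi htb (le_of_lt hspos) hslt
  refine ⟨1 - s, by linarith, s • y, ?_⟩
  rw [hkey, hmd, hL, smul_set_add_dist, smul_set_assoc, smul_set_assoc,
    Set.smul_set_singleton, mul_comm β (1 - s)]
  rw [add_assoc, Set.singleton_add_singleton]
  congr 2
  module

end Aux3

section Aux4
variable {n : ℕ}

lemma convex_le_of_interior_lt {L : Set (Eucl n)} (hLc : Convex ℝ L)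
    {z₀ : Eucl n} (hz₀ : z₀ ∈ interior L) (f : Eucl n →L[ℝ] ℝ) (M : ℝ)
    (hf : ∀ a ∈ interior L, f a < M) : ∀ z ∈ L, f z ≤ M := by
  intro z hz
  set w : ℕ → Eucl n := fun k => z + (1 / ((k : ℝ) + 1)) • (z₀ - z) with hwdef
  have hwmem : ∀ k, w k ∈ interior L := by
    intro k
    apply hLc.add_smul_sub_mem_interior hz hz₀
    constructor
    · positivity
    · rw [div_le_one (by positivity)]
      linarith [Nat.cast_nonneg (α := ℝ) k]
  have hwt : Filter.Tendsto w Filter.atTop (nhds z) := by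
    have h1 : Filter.Tendsto (fun k : ℕ => (1 / ((k : ℝ) + 1))) Filter.atTop (nhds 0) :=
      tendsto_one_div_add_atTop_nhds_zero_nat
    have h2 := h1.smul_const (z₀ - z)
    rw [zero_smul] at h2
    have h3 := h2.const_add z
    rwa [add_zero] at h3
  have hft : Filter.Tendsto (fun k => f (w k)) Filter.atTop (nhds (f z)) :=
    (f.continuous.tendsto z).comp hwt
  apply le_of_tendsto hft
  exact Filter.Eventually.of_forall fun k => le_of_lt (hf _ (hwmem k))

lemma image_homeo_smul_add (a : ℝ) (ha : a ≠ 0) (v : Eucl n) (S : Set (Eucl n)) :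
    ((Homeomorph.smulOfNeZero a ha).trans (Homeomorph.addRight v)) '' S = a • S + {v} := by
  ext x
  simp only [Set.mem_image, Homeomorph.trans_apply, Homeomorph.coe_addRight,
    Homeomorph.smulOfNeZero_apply, Set.mem_add, Set.mem_smul_set, Set.mem_singleton_iff]
  constructor
  · rintro ⟨z, hz, rfl⟩
    exact ⟨a • z, ⟨z, hz, rfl⟩, v, rfl, rfl⟩
  · rintro ⟨y, ⟨z, hz, rfl⟩, w, rfl, rfl⟩
    exact ⟨z, hz, rfl⟩

lemma image_homeo_add_smul (a : ℝ) (ha : a ≠ 0) (v : Eucl n) (S : Set (Eucl n)) :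
    ((Homeomorph.addRight v).trans (Homeomorph.smulOfNeZero a ha)) '' S = a • (S + {v}) := by
  ext x
  simp only [Set.mem_image, Homeomorph.trans_apply, Homeomorph.coe_addRight,
    Homeomorph.smulOfNeZero_apply, Set.mem_smul_set, Set.mem_add, Set.mem_singleton_iff]
  constructor
  · rintro ⟨z, hz, rfl⟩
    exact ⟨z + v, ⟨z, hz, v, rfl, rfl⟩, rfl⟩
  · rintro ⟨y, ⟨z, hz, w, rfl, rfl⟩, rfl⟩
    exact ⟨z, hz, rfl⟩

set_option maxHeartbeats 1000000 in
/-- Forward direction core. -/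
lemma forward_core {L E : Set (Eucl n)} (hL : IsCompact L) (hLc : Convex ℝ L)
    (hLi : (interior L).Nonempty) (hE : IsCompact E) (hEi : (interior E).Nonempty)
    (hE2 : ∃ e₁ ∈ E, ∃ e₂ ∈ E, e₁ ≠ e₂)
    {δ : ℝ} (hδ : 0 < δ) {α : ℝ} (hα : 0 < α) {x : Eucl n}
    (hhom : mdiff L (δ • E) = α • L + {x}) :
    ∃ T : Set (Eucl n), IsCompact T ∧ Convex ℝ T ∧ (interior T).Nonempty ∧
      IsTangentialBody T E ∧ Homothetic L T := by
  obtain ⟨z₀, hz₀⟩ := hLi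
  have hz₀L : z₀ ∈ L := interior_subset hz₀
  have hstep : ∀ p ∈ L, ∀ e ∈ E, α • p + x + δ • e ∈ L := by
    intro p hp e he
    have h1 : α • p + x ∈ mdiff L (δ • E) := by
      rw [hhom]
      exact ⟨α • p, ⟨p, hp, rfl⟩, x, rfl, rfl⟩
    have h2 := mem_mdiff.mp h1 (δ • e) ⟨e, he, rfl⟩
    rwa [show δ • e + (α • p + x) = α • p + x + δ • e by module] at h2
  obtain ⟨R, hR⟩ := hL.isBounded.subset_closedBall 0
  have hnorm : ∀ z ∈ L, ‖z‖ ≤ R := by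
    intro z hz
    have := hR hz
    rwa [Metric.mem_closedBall, dist_zero_right] at this
  obtain ⟨e₁, he₁, e₂, he₂, hne⟩ := hE2
  -- α < 1
  have hα1 : α < 1 := by
    by_contra hge
    push_neg at hge
    set g : Eucl n → Eucl n := fun p => α • p + x + δ • e₁ with hg
    have hgL : ∀ p ∈ L, g p ∈ L := fun p hp => hstep p hp e₁ he₁
    have hgiter : ∀ (p : Eucl n), p ∈ L → ∀ k : ℕ, g^[k] p ∈ L := by
      intro p hp k
      induction k with
      | zero => simpa using hp
      | succ m ih =>
          rw [Function.iterate_succ_apply']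
          exact hgL _ ih
    have hgdiff : ∀ (u v : Eucl n) (k : ℕ), g^[k] u - g^[k] v = α ^ k • (u - v) := by
      intro u v k
      induction k with
      | zero => simp
      | succ m ih =>
          rw [Function.iterate_succ_apply', Function.iterate_succ_apply', hg]
          simp only []
          rw [pow_succ]
          have : α • g^[m] u + x + δ • e₁ - (α • g^[m] v + x + δ • e₁)
              = α • (g^[m] u - g^[m] v) := by module
          rw [this, ih, smul_smul, mul_comm]
    rcases eq_or_lt_of_le hge with heq | hgt
    · -- α = 1 : translation iteration
      have hvz : ∀ (e : Eucl n), e ∈ E → x + δ • e = 0 := by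
        intro e he
        by_contra hv
        have hiter : ∀ k : ℕ, z₀ + (k : ℝ) • (x + δ • e) ∈ L := by
          intro k
          induction k with
          | zero => simpa using hz₀L
          | succ m ih =>
              have := hstep _ ih e he
              rw [← heq] at this
              rwa [show (1:ℝ) • (z₀ + (m : ℝ) • (x + δ • e)) + x + δ • e
                = z₀ + ((m + 1 : ℕ) : ℝ) • (x + δ • e) by push_cast; module] at this
        have hvn : (0:ℝ) < ‖x + δ • e‖ := norm_pos_iff.mpr hv
        obtain ⟨k, hk⟩ := exists_nat_gt ((R + ‖z₀‖) / ‖x + δ • e‖)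
        have hle := hnorm _ (hiter k)
        have hge2 : (k : ℝ) * ‖x + δ • e‖ - ‖z₀‖ ≤ ‖z₀ + (k : ℝ) • (x + δ • e)‖ := by
          have h2 := norm_sub_le (z₀ + (k : ℝ) • (x + δ • e)) z₀
          have h3 : z₀ + (k : ℝ) • (x + δ • e) - z₀ = (k : ℝ) • (x + δ • e) := by abel
          rw [h3, norm_smul, Real.norm_natCast] at h2
          linarith
        have h4 : (R + ‖z₀‖) / ‖x + δ • e‖ * ‖x + δ • e‖ < (k : ℝ) * ‖x + δ • e‖ :=
          mul_lt_mul_of_pos_right hk hvn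
        rw [div_mul_cancel₀ _ (ne_of_gt hvn)] at h4
        linarith
      have h1 := hvz e₁ he₁
      have h2 := hvz e₂ he₂
      apply hne
      have h3 : δ • e₁ = δ • e₂ := add_left_cancel (h1.trans h2.symm)
      exact smul_right_injective (Eucl n) (ne_of_gt hδ) h3
    · -- α > 1 : expansion contradiction
      set d := δ • (e₁ - e₂) with hd
      have hdnz : d ≠ 0 := by
        rw [hd]
        intro h
        exact hne (sub_eq_zero.mp (smul_right_injective (Eucl n) (ne_of_gt hδ)
          (h.trans (smul_zero δ).symm)))
      have hdn : (0:ℝ) < ‖d‖ := norm_pos_iff.mpr hdnz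
      set q₂ : Eucl n := α • z₀ + x + δ • e₂ with hq₂
      have hq₂L : q₂ ∈ L := hstep _ hz₀L e₂ he₂
      have hgz₀ : g z₀ ∈ L := hgL _ hz₀L
      have hsubd : g z₀ - q₂ = d := by rw [hg, hq₂, hd]; simp only []; module
      obtain ⟨k, hk⟩ := pow_unbounded_of_one_lt ((2 * R) / ‖d‖) hgt
      have hmem1 := hgiter _ hgz₀ k
      have hmem2 := hgiter _ hq₂L k
      have hdk := hgdiff (g z₀) q₂ k
      rw [hsubd] at hdk
      have hb : ‖g^[k] (g z₀) - g^[k] q₂‖ ≤ 2 * R := by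
        calc ‖g^[k] (g z₀) - g^[k] q₂‖ ≤ ‖g^[k] (g z₀)‖ + ‖g^[k] q₂‖ := norm_sub_le _ _
          _ ≤ 2 * R := by
              have := hnorm _ hmem1
              have := hnorm _ hmem2
              linarith
      rw [hdk, norm_smul, Real.norm_eq_abs, abs_of_pos (pow_pos hα k)] at hb
      have h4 : (2 * R) / ‖d‖ * ‖d‖ < α ^ k * ‖d‖ := mul_lt_mul_of_pos_right hk hdn
      rw [div_mul_cancel₀ _ (ne_of_gt hdn)] at h4
      linarith
  -- the tangential body data
  have h1α : (0:ℝ) < 1 - α := by linarith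
  set ρ : ℝ := δ / (1 - α) with hρdef
  have hρ : 0 < ρ := div_pos hδ h1α
  set c : Eucl n := (1 / (1 - α)) • x with hcdef
  have hfix : ∀ e : Eucl n, α • (c + ρ • e) + x + δ • e = c + ρ • e := by
    intro e
    rw [hcdef, hρdef]
    match_scalars <;> field_simp <;> ring
  have hcE : ∀ e ∈ E, c + ρ • e ∈ L := by
    intro e he
    have hpmem : ∀ k : ℕ, (c + ρ • e) + α ^ k • (z₀ - (c + ρ • e)) ∈ L := by
      intro k
      induction k with
      | zero =>
          rw [pow_zero, show (c + ρ • e) + (1:ℝ) • (z₀ - (c + ρ • e)) = z₀ by module]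
          exact hz₀L
      | succ m ih =>
          have h2 := hstep _ ih e he
          have h3 : α • ((c + ρ • e) + α ^ m • (z₀ - (c + ρ • e))) + x + δ • e
              = (c + ρ • e) + α ^ (m + 1) • (z₀ - (c + ρ • e)) := by
            have h4 := hfix e
            rw [pow_succ]
            linear_combination (norm := module) h4
          rwa [h3] at h2
    have hpt : Filter.Tendsto (fun k : ℕ => (c + ρ • e) + α ^ k • (z₀ - (c + ρ • e)))
        Filter.atTop (nhds (c + ρ • e)) := by
      have h1 : Filter.Tendsto (fun k : ℕ => α ^ k) Filter.atTop (nhds 0) :=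
        tendsto_pow_atTop_nhds_zero_of_lt_one (le_of_lt hα) hα1
      have h2 := h1.smul_const (z₀ - (c + ρ • e))
      rw [zero_smul] at h2
      have h3 := h2.const_add (c + ρ • e)
      rwa [add_zero] at h3
    exact hL.isClosed.mem_of_tendsto hpt (Filter.Eventually.of_forall hpmem)
  -- tangency at every boundary point of L
  have htang : ∀ q ∈ frontier L, ∃ u : Eucl n, u ≠ 0 ∧
      (∀ z ∈ L, (inner ℝ z u : ℝ) ≤ (inner ℝ q u : ℝ)) ∧
      ∃ e' ∈ E, (inner ℝ (c + ρ • e') u : ℝ) = (inner ℝ q u : ℝ) := by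
    intro q hq
    have hqL : q ∈ L := hL.isClosed.frontier_subset hq
    have hqni : q ∉ interior L := by
      rw [hL.isClosed.frontier_eq] at hq
      exact hq.2
    set q' : Eucl n := α • q + x with hq'def
    -- find e* with q' + δ e* not interior
    have hestar : ∃ e' ∈ E, q' + δ • e' ∉ interior L := by
      by_contra hall
      push_neg at hall
      set C : Set (Eucl n) := (fun e => q' + δ • e) '' E with hC
      have hCcomp : IsCompact C := hE.image (continuous_const.add (continuous_id.const_smul δ))
      have hCsub : C ⊆ interior L := by
        rintro _ ⟨e, he, rfl⟩
        exact hall e he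
      obtain ⟨ε, hε, hthick⟩ := hCcomp.exists_thickening_subset_open isOpen_interior hCsub
      have hballsub : ball q' ε ⊆ mdiff L (δ • E) := by
        intro v hv
        rw [mem_mdiff]
        rintro b ⟨e, he, rfl⟩
        have hdist : dist (δ • e + v) (q' + δ • e) < ε := by
          rw [dist_eq_norm]
          rw [mem_ball, dist_eq_norm] at hv
          rwa [show δ • e + v - (q' + δ • e) = v - q' by abel]
        have hmem : δ • e + v ∈ Metric.thickening ε C := by
          rw [Metric.mem_thickening_iff]
          exact ⟨q' + δ • e, ⟨e, he, rfl⟩, hdist⟩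
        exact interior_subset (hthick hmem)
      have hq'int : q' ∈ interior (mdiff L (δ • E)) :=
        mem_interior.mpr ⟨ball q' ε, hballsub, isOpen_ball, mem_ball_self hε⟩
      rw [hhom] at hq'int
      rw [← image_homeo_smul_add α (ne_of_gt hα) x L,
        ← Homeomorph.image_interior] at hq'int
      obtain ⟨p, hp, hpq⟩ := hq'int
      have hpq2 : p = q := by
        apply ((Homeomorph.smulOfNeZero α (ne_of_gt hα)).trans
          (Homeomorph.addRight x)).injective
        rw [hpq, hq'def]
        rfl
      rw [hpq2] at hp
      exact hqni hp
    obtain ⟨e', he', hp'ni⟩ := hestar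
    set p' : Eucl n := q' + δ • e' with hp'def
    have hp'L : p' ∈ L := by
      have := hstep q hqL e' he'
      rwa [show α • q + x + δ • e' = p' by rw [hp'def, hq'def]] at this
    obtain ⟨f, hf⟩ := geometric_hahn_banach_open_point hLc.interior isOpen_interior hp'ni
    have hfL : ∀ z ∈ L, f z ≤ f p' := convex_le_of_interior_lt hLc hz₀ f (f p') hf
    set u : Eucl n := (InnerProductSpace.toDual ℝ (Eucl n)).symm f with hu
    have hfu : ∀ w : Eucl n, (inner ℝ w u : ℝ) = f w := by
      intro w
      rw [hu, real_inner_comm]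
      exact InnerProductSpace.toDual_symm_apply
    have hune : u ≠ 0 := by
      intro h0
      have h1 : f z₀ < f p' := hf z₀ hz₀
      have h2 : f z₀ = 0 := by rw [← hfu z₀, h0, inner_zero_right]
      have h3 : f p' = 0 := by rw [← hfu p', h0, inner_zero_right]
      rw [h2, h3] at h1
      exact lt_irrefl 0 h1
    have hval : f p' = α * f q + f x + δ * f e' := by
      rw [hp'def, hq'def, map_add, map_add, f.map_smul, f.map_smul, smul_eq_mul, smul_eq_mul]
    have hmax : ∀ z ∈ L, f z ≤ f q := by
      intro z hz
      have h1 : f (α • z + x + δ • e') ≤ f p' := hfL _ (hstep z hz e' he')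
      have h3 : f (α • z + x + δ • e') = α * f z + f x + δ * f e' := by
        rw [map_add, map_add, f.map_smul, f.map_smul, smul_eq_mul, smul_eq_mul]
      rw [h3, hval] at h1
      have h4 : α * f z ≤ α * f q := by linarith
      exact le_of_mul_le_mul_left h4 hα
    have hfq : f q = f p' := le_antisymm (hfL q hqL) (hmax p' hp'L)
    have htouch : f (c + ρ • e') = f q := by
      have h2 : f q = α * f q + f x + δ * f e' := hfq.trans hval
      have hfc : f (c + ρ • e') = (1 / (1 - α)) * f x + ρ * f e' := by
        rw [hcdef, map_add, f.map_smul, f.map_smul, smul_eq_mul, smul_eq_mul]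
      rw [hfc, hρdef]
      field_simp
      linear_combination -h2
    refine ⟨u, hune, ?_, e', he', ?_⟩
    · intro z hz
      rw [hfu, hfu]
      exact hmax z hz
    · rw [hfu, hfu, htouch]
  clear hfix
  clear_value ρ c
  clear hρdef hcdef
  -- assemble the tangential body
  set ψ := (Homeomorph.addRight (-c)).trans (Homeomorph.smulOfNeZero ρ⁻¹
    (inv_ne_zero (ne_of_gt hρ))) with hψ
  set T : Set (Eucl n) := ρ⁻¹ • (L + {-c}) with hT
  have hTimg : T = ψ '' L := by
    rw [hT, hψ, image_homeo_add_smul]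
  have hψap : ∀ z : Eucl n, ψ z = ρ⁻¹ • (z + -c) := fun z => rfl
  have hinner : ∀ (z w : Eucl n), (inner ℝ (ψ z) w : ℝ)
      = ρ⁻¹ * ((inner ℝ z w : ℝ) - (inner ℝ c w : ℝ)) := by
    intro z w
    rw [hψap, real_inner_smul_left, inner_add_left, inner_neg_left]
    ring
  have hTcomp : IsCompact T := by
    rw [hTimg]
    exact hL.image ψ.continuous
  have hTconv : Convex ℝ T := by
    rw [hT]
    exact (hLc.add (convex_singleton _)).smul _
  have hTint : (interior T).Nonempty := by
    rw [hTimg, ← Homeomorph.image_interior]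
    exact ⟨ψ z₀, Set.mem_image_of_mem _ hz₀⟩
  have hET : E ⊆ T := by
    intro e he
    rw [hTimg]
    refine ⟨c + ρ • e, hcE e he, ?_⟩
    rw [hψap]
    rw [show c + ρ • e + -c = ρ • e by abel]
    rw [smul_smul, inv_mul_cancel₀ (ne_of_gt hρ), one_smul]
  have hhomo : Homothetic L T := by
    refine ⟨ρ, hρ, c, ?_⟩
    rw [hT, smul_set_assoc, mul_inv_cancel₀ (ne_of_gt hρ), one_smul]
    ext z
    rw [Set.mem_add]
    constructor
    · intro hz
      exact ⟨z + -c, mem_add_singleton'.mpr (by simpa using hz), c, rfl, by abel⟩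
    · rintro ⟨a, ha, b, (rfl : b = c), rfl⟩
      have := mem_add_singleton'.mp ha
      simpa using this
  refine ⟨T, hTcomp, hTconv, hTint, ⟨hET, ?_⟩, hhomo⟩
  intro p hp
  rw [hTimg, ← Homeomorph.image_frontier] at hp
  obtain ⟨q, hq, rfl⟩ := hp
  obtain ⟨u, hune, hmax, e', he', htouch⟩ := htang q hq
  have hqL : q ∈ L := hL.isClosed.frontier_subset hq
  refine ⟨u, hune, (inner ℝ (ψ q) u : ℝ), rfl, ?_, ?_⟩
  · constructor
    · refine ⟨ψ q, ?_, rfl⟩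
      rw [hTimg]
      exact ⟨q, hqL, rfl⟩
    · left
      intro tt htt
      rw [hTimg] at htt
      obtain ⟨z, hz, rfl⟩ := htt
      show (inner ℝ (ψ z) u : ℝ) ≤ (inner ℝ (ψ q) u : ℝ)
      rw [hinner, hinner]
      have := hmax z hz
      have hρinv : (0:ℝ) < ρ⁻¹ := inv_pos.mpr hρ
      nlinarith
  · constructor
    · refine ⟨e', he', ?_⟩
      show (inner ℝ e' u : ℝ) = (inner ℝ (ψ q) u : ℝ)
      rw [hinner]
      have h1 : (inner ℝ (c + ρ • e') u : ℝ) = (inner ℝ c u : ℝ) + ρ * (inner ℝ e' u : ℝ) := by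
        rw [inner_add_left, real_inner_smul_left]
      rw [h1] at htouch
      have h2 : ρ * (inner ℝ e' u : ℝ) = (inner ℝ q u : ℝ) - (inner ℝ c u : ℝ) := by linarith
      rw [← h2, ← mul_assoc, inv_mul_cancel₀ (ne_of_gt hρ), one_mul]
    · left
      intro e he
      have heT : e ∈ T := hET he
      rw [hTimg] at heT
      obtain ⟨z, hz, rfl⟩ := heT
      show (inner ℝ (ψ z) u : ℝ) ≤ (inner ℝ (ψ q) u : ℝ)
      rw [hinner, hinner]
      have := hmax z hz
      have hρinv : (0:ℝ) < ρ⁻¹ := inv_pos.mpr hρ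
      nlinarith

end Aux4

section Aux5
variable {n : ℕ}

lemma mdiff_isClosed {M N : Set (Eucl n)} (hM : IsClosed M) : IsClosed (mdiff M N) := by
  have : mdiff M N = ⋂ b ∈ N, (fun x => b + x) ⁻¹' M := by
    ext x
    simp [mem_mdiff]
  rw [this]
  exact isClosed_biInter fun b _ => hM.preimage (continuous_const.add continuous_id)

lemma mdiff_convex {M N : Set (Eucl n)} (hM : Convex ℝ M) : Convex ℝ (mdiff M N) := by
  intro z₁ h₁ z₂ h₂ a b ha hb hab
  rw [mem_mdiff]
  intro e he
  have h3 := hM (mem_mdiff.mp h₁ e he) (mem_mdiff.mp h₂ e he) ha hb hab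
  have he' : a • e + b • e = e := by rw [← add_smul, hab, one_smul]
  rwa [show a • (e + z₁) + b • (e + z₂) = e + (a • z₁ + b • z₂) by
    linear_combination (norm := module) he'] at h3

lemma mdiff_isCompact {M N : Set (Eucl n)} (hM : IsCompact M) (hMcl : IsClosed M)
    (hN : N.Nonempty) : IsCompact (mdiff M N) := by
  obtain ⟨b₀, hb₀⟩ := hN
  apply IsCompact.of_isClosed_subset (hM.add isCompact_singleton) (mdiff_isClosed hMcl)
  intro x hx
  exact ⟨b₀ + x, mem_mdiff.mp hx b₀ hb₀, -b₀, rfl, by module⟩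

lemma parallelBody_nonpos {K E : Set (Eucl n)} {l : ℝ} (hl : l ≤ 0) :
    parallelBody K E l = mdiff K ((-l) • E) := by
  rw [parallelBody, if_pos hl, abs_of_nonpos hl]

lemma parallelBody_pos {K E : Set (Eucl n)} {l : ℝ} (hl : 0 < l) :
    parallelBody K E l = K + l • E := by
  rw [parallelBody, if_neg (not_le.mpr hl)]

lemma parallelBody_diff {K E : Set (Eucl n)} (hK : IsCompact K) (hKc : Convex ℝ K)
    (hE : IsCompact E) (hEc : Convex ℝ E) (hEne : E.Nonempty)
    {l₀ l₁ : ℝ} (h01 : l₀ < l₁) :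
    parallelBody K E l₀ = mdiff (parallelBody K E l₁) ((l₁ - l₀) • E) := by
  rcases le_or_gt l₁ 0 with h1 | h1
  · have h0 : l₀ ≤ 0 := le_trans (le_of_lt h01) h1
    have hss : (-l₁) + (l₁ - l₀) = -l₀ := by ring
    rw [parallelBody_nonpos h0, parallelBody_nonpos h1, mdiff_mdiff,
      ← hEc.add_smul (neg_nonneg.mpr h1) (by linarith : (0:ℝ) ≤ l₁ - l₀), hss]
  · rcases le_or_gt l₀ 0 with h0 | h0
    · rw [parallelBody_nonpos h0, parallelBody_pos h1]
      have hsplit : (l₁ - l₀) • E = l₁ • E + (-l₀) • E := by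
        rw [← hEc.add_smul (le_of_lt h1) (neg_nonneg.mpr h0),
          show l₁ + -l₀ = l₁ - l₀ by ring]
      rw [hsplit, ← mdiff_mdiff, mdiff_add_cancel hK hKc (hE.smul l₁) (hEne.smul_set)]
    · rw [parallelBody_pos h0, parallelBody_pos h1]
      have hsplit : l₁ • E = l₀ • E + (l₁ - l₀) • E := by
        rw [← hEc.add_smul (le_of_lt h0) (by linarith : (0:ℝ) ≤ l₁ - l₀),
          show l₀ + (l₁ - l₀) = l₁ by ring]
      rw [hsplit, ← add_assoc,
        mdiff_add_cancel (hK.add (hE.smul l₀)) (hKc.add (hEc.smul l₀)) (hE.smul _)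
          hEne.smul_set]

lemma parallelBody_props {K E : Set (Eucl n)} (hK : IsCompact K) (hKc : Convex ℝ K)
    (hKi : (interior K).Nonempty) (hE : IsCompact E) (hEc : Convex ℝ E)
    (hEi : (interior E).Nonempty) {l : ℝ} (hl : -(inradius K E) < l) :
    IsCompact (parallelBody K E l) ∧ Convex ℝ (parallelBody K E l) ∧
      (interior (parallelBody K E l)).Nonempty := by
  obtain ⟨e₀, he₀i⟩ := hEi
  have he₀ : e₀ ∈ E := interior_subset he₀i
  have hEne : E.Nonempty := ⟨e₀, he₀⟩
  obtain ⟨z₀, hz₀i⟩ := hKi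
  have hz₀ : z₀ ∈ K := interior_subset hz₀i
  rcases le_or_gt l 0 with h0 | h0
  · rw [parallelBody_nonpos h0]
    refine ⟨mdiff_isCompact hK hK.isClosed hEne.smul_set, mdiff_convex hKc, ?_⟩
    -- use the inradius to find a large copy of E inside K
    have hSne : (0:ℝ) ∈ {r : ℝ | 0 ≤ r ∧ ∃ x : Eucl n, r • E + {x} ⊆ K} := by
      refine ⟨le_refl 0, z₀, ?_⟩
      rw [Set.zero_smul_set hEne, zero_add, Set.singleton_subset_iff]
      exact hz₀
    have hlt : -l < inradius K E := by linarith
    obtain ⟨s, hs, hls⟩ := exists_lt_of_lt_csSup ⟨0, hSne⟩ hlt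
    obtain ⟨hs0, xx, hxx⟩ := hs
    set t : ℝ := s + l with htdef
    have ht : 0 < t := by linarith
    have hspos : 0 < s := lt_of_le_of_lt (neg_nonneg.mpr h0) hls
    have hsub : t • E + {xx} ⊆ mdiff K ((-l) • E) := by
      rintro _ ⟨a, ⟨e, he, rfl⟩, b, hb, rfl⟩
      rw [Set.mem_singleton_iff] at hb
      rw [hb]
      rw [mem_mdiff]
      rintro _ ⟨e', he', rfl⟩
      apply hxx
      refine ⟨s • ((-l / s) • e' + (t / s) • e), ⟨(-l / s) • e' + (t / s) • e, ?_, rfl⟩,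
        xx, rfl, ?_⟩
      · apply hEc he' he
        · exact div_nonneg (neg_nonneg.mpr h0) (le_of_lt hspos)
        · exact div_nonneg (le_of_lt ht) (le_of_lt hspos)
        · rw [htdef]
          field_simp
          ring
      · have hsne : s ≠ 0 := ne_of_gt hspos
        rw [htdef]
        match_scalars <;> field_simp <;> ring
    have hin : t • e₀ + xx ∈ interior (mdiff K ((-l) • E)) := by
      apply interior_mono hsub
      apply subset_interior_add_left
      refine ⟨t • e₀, ?_, xx, rfl, rfl⟩
      rw [interior_smul₀ (ne_of_gt ht)]
      exact ⟨e₀, he₀i, rfl⟩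
    exact ⟨t • e₀ + xx, hin⟩
  · rw [parallelBody_pos h0]
    refine ⟨hK.add (hE.smul l), hKc.add (hEc.smul l), ?_⟩
    refine ⟨z₀ + l • e₀, ?_⟩
    apply subset_interior_add_left
    exact ⟨z₀, hz₀i, l • e₀, ⟨e₀, he₀, rfl⟩, rfl⟩

end Aux5

section Final
variable {n : ℕ}

lemma exists_two_points {E : Set (Eucl n)} (hn : 0 < n) (hEi : (interior E).Nonempty) :
    ∃ e₁ ∈ E, ∃ e₂ ∈ E, e₁ ≠ e₂ := by
  obtain ⟨e₀, he₀⟩ := hEi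
  obtain ⟨ε, hε, hball⟩ := Metric.isOpen_iff.mp isOpen_interior e₀ he₀
  set v : Eucl n := (ε / 2) • EuclideanSpace.single (⟨0, hn⟩ : Fin n) (1:ℝ) with hv
  have hvn : ‖v‖ = ε / 2 := by
    rw [hv, norm_smul, EuclideanSpace.norm_single, norm_one, mul_one, Real.norm_eq_abs,
      abs_of_pos (by linarith : (0:ℝ) < ε / 2)]
  have hvne : v ≠ 0 := by
    intro h
    rw [h, norm_zero] at hvn
    linarith
  have hmem : e₀ + v ∈ E := by
    apply interior_subset
    apply hball
    rw [mem_ball, dist_eq_norm, show e₀ + v - e₀ = v by abel, hvn]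
    linarith
  refine ⟨e₀ + v, hmem, e₀, interior_subset he₀, ?_⟩
  intro h
  exact hvne (by linear_combination (norm := module) h)

/-- K_{λ₀} is homothetic to K_{λ₁} iff K_{λ₁} is homothetic to
a tangential body of E. -/
theorem statement6 {n : ℕ} (K E : Set (Eucl n))
    (hKcomp : IsCompact K) (hKconv : Convex ℝ K) (hKint : (interior K).Nonempty)
    (hEcomp : IsCompact E) (hEconv : Convex ℝ E) (hEint : (interior E).Nonempty)
    (l₀ l₁ : ℝ) (hl₀ : -(inradius K E) < l₀) (hl₀₁ : l₀ < l₁) :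
    Homothetic (parallelBody K E l₀) (parallelBody K E l₁) ↔
      ∃ T : Set (Eucl n), IsCompact T ∧ Convex ℝ T ∧ (interior T).Nonempty ∧
        IsTangentialBody T E ∧ Homothetic (parallelBody K E l₁) T := by
  have hKne : K.Nonempty := hKint.mono interior_subset
  have hEne : E.Nonempty := hEint.mono interior_subset
  rcases Nat.eq_zero_or_pos n with hn | hn
  · -- degenerate dimension 0
    subst hn
    haveI hsub : Subsingleton (Eucl 0) := ⟨fun a b => PiLp.ext fun i => Fin.elim0 i⟩
    have huniv : ∀ (S : Set (Eucl 0)), S.Nonempty → S = Set.univ := by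
      rintro S ⟨a, ha⟩
      apply Set.eq_univ_of_forall
      intro x
      rwa [Subsingleton.elim x a]
    have hKu : K = Set.univ := huniv K hKne
    have hPne : ∀ l : ℝ, (parallelBody K E l).Nonempty := by
      intro l
      rw [parallelBody]
      split_ifs with h
      · refine ⟨0, mem_mdiff.mpr fun b _ => ?_⟩
        rw [hKu]
        exact Set.mem_univ _
      · obtain ⟨k, hk⟩ := hKne
        obtain ⟨e, he⟩ := hEne
        exact ⟨k + l • e, ⟨k, hk, l • e, ⟨e, he, rfl⟩, rfl⟩⟩
    have hP0 := huniv _ (hPne l₀)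
    have hP1 := huniv _ (hPne l₁)
    have hhomu : Homothetic (Set.univ : Set (Eucl 0)) Set.univ := by
      refine ⟨1, one_pos, 0, ?_⟩
      symm
      apply huniv
      exact ⟨(1:ℝ) • (0 : Eucl 0) + 0, ⟨(1:ℝ) • 0, ⟨0, Set.mem_univ _, rfl⟩, 0, rfl, rfl⟩⟩
    constructor
    · intro _
      haveI : Finite (Eucl 0) := Finite.of_subsingleton
      refine ⟨Set.univ, Set.finite_univ.isCompact, convex_univ, ?_, ⟨Set.subset_univ E, ?_⟩, ?_⟩
      · rw [interior_univ]
        exact ⟨0, Set.mem_univ _⟩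
      · intro p hp
        rw [frontier_univ] at hp
        exact absurd hp (Set.notMem_empty p)
      · rw [hP1]
        exact hhomu
    · intro _
      rw [hP0, hP1]
      exact hhomu
  · -- main case
    have hE2 := exists_two_points hn hEint
    have hδ : (0:ℝ) < l₁ - l₀ := by linarith
    have hdiff := parallelBody_diff hKcomp hKconv hEcomp hEconv hEne hl₀₁
    have hl₁ : -(inradius K E) < l₁ := lt_trans hl₀ hl₀₁
    obtain ⟨hLcomp, hLconv, hLint⟩ :=
      parallelBody_props hKcomp hKconv hKint hEcomp hEconv hEint hl₁
    obtain ⟨_, _, hP0int⟩ :=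
      parallelBody_props hKcomp hKconv hKint hEcomp hEconv hEint hl₀
    constructor
    · rintro ⟨α, hα, x, hhomo⟩
      rw [hdiff] at hhomo
      exact forward_core hLcomp hLconv hLint hEcomp hEint hE2 hδ hα hhomo
    · rintro ⟨T, hTcomp, hTconv, hTint, htb, β, hβ, y, hLT⟩
      rw [hdiff]
      apply backward_core hTcomp hTconv hTint hEcomp hEint hE2 htb hβ hLT hδ
      rw [← hdiff]
      exact hP0int

end Final
end

section
/- Let K and E be full-dimensional convex bodies in ℝⁿ and let Ω ⊆ S^{n−1} determine K. Then for every λ ∈ [−r(K;E), 0], the inner parallel body satisfies K ∼ |λ|E = ⋂_{u ∈ Ω} H⁻_{u, h_K(u) + λ·h_E(u)}. -/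
open scoped Pointwise RealInnerProductSpace
open Metric MeasureTheory

/-- If Ω ⊆ S^{n−1} determines K, then for λ ∈ [−r(K;E), 0],
K ∼ |λ|E = ⋂_{u ∈ Ω} H⁻_{u, h_K(u) + λ h_E(u)}. -/
theorem statement10 {n : ℕ} (K E : Set (Eucl n))
    (hKcomp : IsCompact K) (hKconv : Convex ℝ K) (hKint : (interior K).Nonempty)
    (hEcomp : IsCompact E) (hEconv : Convex ℝ E) (hEint : (interior E).Nonempty)
    (Ω : Set (Eucl n)) (hΩsph : Ω ⊆ sphere (0 : Eucl n) 1) (hΩdet : Determines Ω K)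
    (l : ℝ) (hl₀ : -(inradius K E) ≤ l) (hl₁ : l ≤ 0) :
    mdiff K (|l| • E) = ⋂ u ∈ Ω, halfspace u (suppFn K u + l * suppFn E u) := by
  have hEne : E.Nonempty := hEint.mono interior_subset
  have habs : |l| = -l := abs_of_nonpos hl₁
  ext x
  simp only [mdiff, Set.mem_setOf_eq, Set.mem_iInter, halfspace]
  constructor
  · intro hx u hu
    have hK_half : K ⊆ halfspace u (suppFn K u) := by
      intro y hy
      rw [hΩdet] at hy
      simp only [Set.mem_iInter] at hy
      exact hy u hu
    have key : ∀ e ∈ E, |l| * inner ℝ e u + inner ℝ x u ≤ suppFn K u := by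
      intro e he
      have hmem : |l| • e + x ∈ K :=
        hx (Set.add_mem_add (Set.smul_mem_smul_set he) rfl)
      have h2 := hK_half hmem
      rw [halfspace, Set.mem_setOf_eq, inner_add_left, real_inner_smul_left] at h2
      exact h2
    rcases lt_or_eq_of_le hl₁ with hlt | heq
    · have hpos : 0 < |l| := abs_pos.mpr (ne_of_lt hlt)
      have hsup : suppFn E u ≤ (suppFn K u - inner ℝ x u) / |l| := by
        apply csSup_le (hEne.image _)
        rintro a ⟨e, he, rfl⟩
        rw [le_div_iff₀ hpos]
        nlinarith [key e he, abs_nonneg l]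
      have h3 : suppFn E u * |l| ≤ suppFn K u - inner ℝ x u := (le_div_iff₀ hpos).mp hsup
      have h4 : l * suppFn E u = -(suppFn E u * |l|) := by rw [habs]; ring
      linarith
    · subst heq
      obtain ⟨e, he⟩ := hEne
      have h5 := key e he
      simp only [abs_zero, zero_mul, zero_add] at h5 ⊢
      linarith
  · intro hx y hy
    rw [Set.add_singleton] at hy
    obtain ⟨a, ha, rfl⟩ := hy
    obtain ⟨e, he, rfl⟩ := ha
    rw [hΩdet]
    simp only [Set.mem_iInter, halfspace, Set.mem_setOf_eq]
    intro u hu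
    have hbdd : BddAbove ((fun x => (inner ℝ x u : ℝ)) '' E) :=
      (hEcomp.image (continuous_id.inner continuous_const)).bddAbove
    have hE : (inner ℝ e u : ℝ) ≤ suppFn E u := le_csSup hbdd ⟨e, he, rfl⟩
    have hx' := hx u hu
    have hmul : |l| * inner ℝ e u ≤ |l| * suppFn E u :=
      mul_le_mul_of_nonneg_left hE (abs_nonneg l)
    rw [inner_add_left, real_inner_smul_left, habs]
    rw [habs] at hmul
    linarith
end

section
/- Let K and E be full-dimensional convex bodies in ℝⁿ and let Ω ⊆ S^{n−1} determine K, with the convex hull of Ω containing the origin in its interior. Then for every λ ∈ [−r(K;E), 0], the inner parallel bodies of K relative to E and relative to E^Ω coincide: K ∼ |λ|E = K ∼ |λ|E^Ω. -/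
open scoped Pointwise RealInnerProductSpace
open Metric MeasureTheory

/-- For λ ∈ [−r(K;E), 0], the inner parallel bodies of K relative to E
and relative to E^Ω coincide: K ∼ |λ|E = K ∼ |λ|E^Ω. -/
theorem statement12 {n : ℕ} (K E : Set (Eucl n))
    (hKcomp : IsCompact K) (hKconv : Convex ℝ K) (hKint : (interior K).Nonempty)
    (hEcomp : IsCompact E) (hEconv : Convex ℝ E) (hEint : (interior E).Nonempty)
    (Ω : Set (Eucl n)) (hΩsph : Ω ⊆ sphere (0 : Eucl n) 1) (hΩdet : Determines Ω K)
    (hΩhull : (0 : Eucl n) ∈ interior (convexHull ℝ Ω))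
    (l : ℝ) (hl₀ : -(inradius K E) ≤ l) (hl₁ : l ≤ 0) :
    mdiff K (|l| • E) = mdiff K (|l| • tangBody E Ω) := by
  have ha0 : (0:ℝ) ≤ |l| := abs_nonneg l
  have hEne : E.Nonempty := hEint.mono interior_subset
  have hbddK : ∀ u : Eucl n, BddAbove ((fun x => (inner ℝ x u : ℝ)) '' K) := fun u =>
    (hKcomp.image (Continuous.inner continuous_id continuous_const)).bddAbove
  have hbddE : ∀ u : Eucl n, BddAbove ((fun x => (inner ℝ x u : ℝ)) '' E) := fun u =>
    (hEcomp.image (Continuous.inner continuous_id continuous_const)).bddAbove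
  have hEsub : E ⊆ tangBody E Ω := by
    intro z hz
    refine Set.mem_iInter₂.2 fun u hu => ?_
    exact le_csSup (hbddE u) ⟨z, hz, rfl⟩
  ext x
  constructor
  · intro hx w hw
    rcases Set.mem_add.1 hw with ⟨p, hp, q, hq, rfl⟩
    simp only [Set.mem_singleton_iff] at hq; subst q
    rcases Set.mem_smul_set.1 hp with ⟨y, hy, rfl⟩
    rw [hΩdet]
    refine Set.mem_iInter₂.2 fun u hu => ?_
    have hKmem : ∀ z ∈ E, |l| • z + x ∈ K := fun z hz =>
      hx (Set.add_mem_add (Set.smul_mem_smul_set hz) rfl)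
    have hKle : ∀ z ∈ E, |l| * (inner ℝ z u : ℝ) + (inner ℝ x u : ℝ) ≤ suppFn K u := by
      intro z hz
      have h : (inner ℝ (|l| • z + x) u : ℝ) ≤ suppFn K u :=
        le_csSup (hbddK u) ⟨_, hKmem z hz, rfl⟩
      rw [inner_add_left, real_inner_smul_left] at h
      exact h
    have hyE : (inner ℝ y u : ℝ) ≤ suppFn E u := Set.mem_iInter₂.1 hy u hu
    have key : |l| * suppFn E u + (inner ℝ x u : ℝ) ≤ suppFn K u := by
      rcases eq_or_lt_of_le ha0 with h0 | h0
      · obtain ⟨z, hz⟩ := hEne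
        have h := hKle z hz
        rw [← h0] at h ⊢
        simpa using h
      · have hsup : suppFn E u ≤ (suppFn K u - (inner ℝ x u : ℝ)) / |l| := by
          refine csSup_le (hEne.image _) ?_
          rintro b ⟨z, hz, rfl⟩
          rw [le_div_iff₀ h0]
          have h := hKle z hz
          nlinarith
        have h2 := (le_div_iff₀ h0).1 hsup
        nlinarith
    have h3 : |l| * (inner ℝ y u : ℝ) ≤ |l| * suppFn E u :=
      mul_le_mul_of_nonneg_left hyE ha0
    show (inner ℝ (|l| • y + x) u : ℝ) ≤ suppFn K u
    rw [inner_add_left, real_inner_smul_left]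
    linarith
  · intro hx w hw
    rcases Set.mem_add.1 hw with ⟨p, hp, q, hq, rfl⟩
    rcases Set.mem_smul_set.1 hp with ⟨y, hy, rfl⟩
    exact hx (Set.add_mem_add (Set.smul_mem_smul_set (hEsub hy)) hq)
end

section
/- Let K and E be full-dimensional convex bodies in ℝⁿ and let Ω ⊆ S^{n−1} determine K. If Λ > −r(K;E), then for all λ ∈ (−r(K;E), Λ], the Wulff shape K(Ω,λ) equals the inner parallel body of K(Ω,Λ) relative to E at distance Λ−λ, i.e. K(Ω,λ) = K(Ω,Λ) ∼ (Λ−λ)·E. -/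
open scoped Pointwise RealInnerProductSpace
open Metric MeasureTheory

/-- For Λ > −r(K;E) and λ ∈ (−r(K;E), Λ],
K(Ω,λ) = K(Ω,Λ) ∼ (Λ−λ)•E. -/
theorem statement13 {n : ℕ} (K E : Set (Eucl n))
    (hKcomp : IsCompact K) (hKconv : Convex ℝ K) (hKint : (interior K).Nonempty)
    (hEcomp : IsCompact E) (hEconv : Convex ℝ E) (hEint : (interior E).Nonempty)
    (Ω : Set (Eucl n)) (hΩsph : Ω ⊆ sphere (0 : Eucl n) 1) (hΩdet : Determines Ω K)
    (Λ : ℝ) (hΛ : -(inradius K E) < Λ)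
    (l : ℝ) (hl₀ : -(inradius K E) < l) (hl₁ : l ≤ Λ) :
    wulff K E Ω l = mdiff (wulff K E Ω Λ) ((Λ - l) • E) := by
  obtain ⟨e₀, he₀⟩ := hEint
  have he₀E : e₀ ∈ E := interior_subset he₀
  have hE0 : E.Nonempty := ⟨e₀, he₀E⟩
  have hbdd : ∀ u : Eucl n, BddAbove ((fun x => (inner ℝ x u : ℝ)) '' E) := fun u =>
    (hEcomp.image (continuous_id.inner continuous_const)).bddAbove
  have hle : ∀ (u : Eucl n), ∀ e ∈ E, (inner ℝ e u : ℝ) ≤ suppFn E u := fun u e he =>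
    le_csSup (hbdd u) ⟨e, he, rfl⟩
  set t := Λ - l with ht
  have ht0 : 0 ≤ t := by simp only [ht]; linarith
  ext x
  simp only [wulff, mdiff, Set.mem_iInter, halfspace, Set.mem_setOf_eq]
  constructor
  · intro hx y hy
    obtain ⟨z, hz, w, hw, rfl⟩ := Set.mem_add.mp hy
    obtain ⟨e, he, rfl⟩ := hz
    rcases Set.mem_singleton_iff.mp hw with rfl
    simp only [Set.mem_iInter, Set.mem_setOf_eq]
    intro u hu
    have h1 := hx u hu
    have h2 : t * (inner ℝ e u : ℝ) ≤ t * suppFn E u :=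
      mul_le_mul_of_nonneg_left (hle u e he) ht0
    have h3 : (inner ℝ ((fun x => t • x) e + w) u : ℝ) = t * inner ℝ e u + inner ℝ w u := by
      simp only
      rw [inner_add_left, real_inner_smul_left]
    rw [h3, ht] at *
    have hexp : (Λ - l) * suppFn E u = Λ * suppFn E u - l * suppFn E u := by ring
    rw [hexp] at h2
    linarith
  · intro hx u hu
    have key : ∀ e ∈ E, t * (inner ℝ e u : ℝ) + inner ℝ x u
        ≤ suppFn K u + Λ * suppFn E u := by
      intro e he
      have hmem : t • e + x ∈ t • E + {x} :=
        Set.add_mem_add (Set.smul_mem_smul_set he) rfl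
      have h4 := hx hmem
      simp only [Set.mem_iInter, Set.mem_setOf_eq] at h4
      have h5 := h4 u hu
      rw [inner_add_left, real_inner_smul_left] at h5
      exact h5
    have hmain : t * suppFn E u ≤ suppFn K u + Λ * suppFn E u - inner ℝ x u := by
      rcases eq_or_lt_of_le ht0 with h | h
      · have hk := key e₀ he₀E
        rw [← h] at hk ⊢
        simp only [zero_mul, zero_add] at hk ⊢
        linarith
      · have hdiv : suppFn E u ≤ (suppFn K u + Λ * suppFn E u - inner ℝ x u) / t := by
          apply csSup_le (hE0.image _)
          rintro b ⟨e, he, rfl⟩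
          rw [le_div_iff₀ h]
          have hk := key e he
          nlinarith
        calc t * suppFn E u ≤ t * ((suppFn K u + Λ * suppFn E u - inner ℝ x u) / t) :=
              mul_le_mul_of_nonneg_left hdiv ht0
          _ = suppFn K u + Λ * suppFn E u - inner ℝ x u := by field_simp
    rw [ht] at hmain
    have hexp : (Λ - l) * suppFn E u = Λ * suppFn E u - l * suppFn E u := by ring
    rw [hexp] at hmain
    linarith
end

section
/- Let K and E be full-dimensional convex bodies in ℝⁿ and let Ω ⊆ S^{n−1} determine K. Then for every λ > 0 the support function of the Wulff shape K(Ω,λ) satisfies h_{K(Ω,λ)}(u) = h_K(u) + λ·h_E(u) for all u ∈ Ω. -/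
open scoped Pointwise RealInnerProductSpace
open Metric MeasureTheory

/-- On a compact nonempty set, the support function is attained at a maximizer. -/
lemma suppFn_exists_max {n : ℕ} {K : Set (Eucl n)} (hK : IsCompact K)
    (hne : K.Nonempty) (u : Eucl n) :
    ∃ x ∈ K, suppFn K u = (inner ℝ x u : ℝ) ∧ ∀ y ∈ K, (inner ℝ y u : ℝ) ≤ (inner ℝ x u : ℝ) := by
  obtain ⟨x, hxK, hxmax⟩ := hK.exists_isMaxOn hne
    ((continuous_id.inner continuous_const).continuousOn
      (s := K) (f := fun y : Eucl n => (inner ℝ y u : ℝ)))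
  refine ⟨x, hxK, ?_, fun y hy => hxmax hy⟩
  apply le_antisymm
  · exact csSup_le (hne.image _) (by rintro _ ⟨y, hy, rfl⟩; exact hxmax hy)
  · exact le_csSup ⟨(inner ℝ x u : ℝ), by rintro _ ⟨y, hy, rfl⟩; exact hxmax hy⟩ ⟨x, hxK, rfl⟩

/-- For λ > 0 and u ∈ Ω, h_{K(Ω,λ)}(u) = h_K(u) + λ h_E(u). -/
theorem statement14 {n : ℕ} (K E : Set (Eucl n))
    (hKcomp : IsCompact K) (hKconv : Convex ℝ K) (hKint : (interior K).Nonempty)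
    (hEcomp : IsCompact E) (hEconv : Convex ℝ E) (hEint : (interior E).Nonempty)
    (Ω : Set (Eucl n)) (hΩsph : Ω ⊆ sphere (0 : Eucl n) 1) (hΩdet : Determines Ω K)
    (l : ℝ) (hl : 0 < l) :
    ∀ u ∈ Ω, suppFn (wulff K E Ω l) u = suppFn K u + l * suppFn E u := by
  intro u hu
  have hKne : K.Nonempty := hKint.mono interior_subset
  have hEne : E.Nonempty := hEint.mono interior_subset
  obtain ⟨x, hxK, hxeq, hxmax⟩ := suppFn_exists_max hKcomp hKne u
  obtain ⟨y, hyE, hyeq, hymax⟩ := suppFn_exists_max hEcomp hEne u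
  -- the point x + l • y lies in the Wulff shape
  have hpt : x + l • y ∈ wulff K E Ω l := by
    refine Set.mem_iInter₂.2 fun v hv => ?_
    obtain ⟨xv, hxvK, hxveq, hxvmax⟩ := suppFn_exists_max hKcomp hKne v
    obtain ⟨yv, hyvE, hyveq, hyvmax⟩ := suppFn_exists_max hEcomp hEne v
    have h1 : (inner ℝ x v : ℝ) ≤ suppFn K v := hxveq ▸ hxvmax x hxK
    have h2 : (inner ℝ y v : ℝ) ≤ suppFn E v := hyveq ▸ hyvmax y hyE
    have : (inner ℝ (x + l • y) v : ℝ) = inner ℝ x v + l * inner ℝ y v := by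
      rw [inner_add_left, real_inner_smul_left]
    simp only [halfspace, Set.mem_setOf_eq, this]
    nlinarith
  have hval : (inner ℝ (x + l • y) u : ℝ) = suppFn K u + l * suppFn E u := by
    rw [inner_add_left, real_inner_smul_left, hxeq, hyeq]
  apply le_antisymm
  · refine csSup_le ⟨_, ⟨_, hpt, rfl⟩⟩ ?_
    rintro _ ⟨z, hz, rfl⟩
    have := Set.mem_iInter₂.1 hz u hu
    exact this
  · exact hval ▸ le_csSup ⟨suppFn K u + l * suppFn E u, by
      rintro _ ⟨z, hz, rfl⟩; exact Set.mem_iInter₂.1 hz u hu⟩ ⟨_, hpt, rfl⟩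
end

section
/- Let K and E be full-dimensional convex bodies in ℝⁿ, let Ω₁ ⊆ Ω₂ ⊆ S^{n−1} both determine K, and let λ > 0. Then K(Ω₁,λ) and K(Ω₂,λ) are both tangential bodies of the outer parallel body K + λ·E, and K(Ω₁,λ) is a tangential body of K(Ω₂,λ). -/
open scoped Pointwise RealInnerProductSpace
open Metric MeasureTheory

open Filter Topology

section Aux

variable {n : ℕ}

lemma innerCont (u : Eucl n) : Continuous fun x : Eucl n => (inner ℝ x u : ℝ) :=
  continuous_id.inner continuous_const

lemma suppFn_le {K : Set (Eucl n)} (hK : IsCompact K) {x : Eucl n} (hx : x ∈ K)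
    (u : Eucl n) : (inner ℝ x u : ℝ) ≤ suppFn K u :=
  le_csSup ((hK.image (innerCont u)).bddAbove) ⟨x, hx, rfl⟩

lemma suppFn_exists {K : Set (Eucl n)} (hK : IsCompact K) (hne : K.Nonempty)
    (u : Eucl n) : ∃ x ∈ K, (inner ℝ x u : ℝ) = suppFn K u := by
  obtain ⟨x, hxK, hmax⟩ := hK.exists_isMaxOn hne (innerCont u).continuousOn
  refine ⟨x, hxK, ?_⟩
  have hg : IsGreatest ((fun y : Eucl n => (inner ℝ y u : ℝ)) '' K) (inner ℝ x u) :=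
    ⟨⟨x, hxK, rfl⟩, by rintro _ ⟨y, hy, rfl⟩; exact hmax hy⟩
  exact hg.csSup_eq.symm

lemma suppFn_sub_le {K : Set (Eucl n)} (hK : IsCompact K) (hne : K.Nonempty)
    {R : ℝ} (hR : ∀ x ∈ K, ‖x‖ ≤ R) (u v : Eucl n) :
    suppFn K u ≤ suppFn K v + R * ‖u - v‖ := by
  apply csSup_le (hne.image _)
  rintro _ ⟨x, hx, rfl⟩
  have h1 : (inner ℝ x (u - v) : ℝ) ≤ ‖x‖ * ‖u - v‖ := real_inner_le_norm _ _
  have h2 : ‖x‖ * ‖u - v‖ ≤ R * ‖u - v‖ :=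
    mul_le_mul_of_nonneg_right (hR x hx) (norm_nonneg _)
  have h3 : (inner ℝ x (u - v) : ℝ) = inner ℝ x u - inner ℝ x v := inner_sub_right _ _ _
  have h4 : (inner ℝ x v : ℝ) ≤ suppFn K v := suppFn_le hK hx v
  linarith

lemma suppFn_tendsto {K : Set (Eucl n)} (hK : IsCompact K) (hne : K.Nonempty)
    {f : ℕ → Eucl n} {u : Eucl n} (hf : Tendsto f atTop (𝓝 u)) :
    Tendsto (fun k => suppFn K (f k)) atTop (𝓝 (suppFn K u)) := by
  obtain ⟨R, hR⟩ : ∃ R : ℝ, ∀ x ∈ K, ‖x‖ ≤ R := by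
    obtain ⟨R, hR⟩ := hK.isBounded.subset_closedBall 0
    exact ⟨R, fun x hx => by simpa using hR hx⟩
  have hnorm : Tendsto (fun k => R * ‖f k - u‖) atTop (𝓝 0) := by
    have := (tendsto_iff_norm_sub_tendsto_zero.1 hf).const_mul R
    simpa using this
  have hlow : Tendsto (fun k => suppFn K u - R * ‖f k - u‖) atTop (𝓝 (suppFn K u)) := by
    simpa using (tendsto_const_nhds.sub hnorm : Tendsto _ atTop (𝓝 (suppFn K u - 0)))
  have hhigh : Tendsto (fun k => suppFn K u + R * ‖f k - u‖) atTop (𝓝 (suppFn K u)) := by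
    simpa using (tendsto_const_nhds.add hnorm : Tendsto _ atTop (𝓝 (suppFn K u + 0)))
  refine tendsto_of_tendsto_of_tendsto_of_le_of_le hlow hhigh ?_ ?_
  · intro k
    have h := suppFn_sub_le hK hne hR u (f k)
    rw [norm_sub_rev] at h
    simp only
    linarith
  · intro k
    have h := suppFn_sub_le hK hne hR (f k) u
    simp only
    linarith

lemma wulff_isClosed (K E Ω : Set (Eucl n)) (l : ℝ) : IsClosed (wulff K E Ω l) := by
  unfold wulff halfspace
  exact isClosed_iInter fun u => isClosed_iInter fun _ =>
    isClosed_le (innerCont u) continuous_const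

lemma wulff_frontier_exists (K E : Set (Eucl n))
    (hK : IsCompact K) (hKne : K.Nonempty) (hE : IsCompact E) (hEne : E.Nonempty)
    (Ω : Set (Eucl n)) (hΩ : Ω ⊆ sphere (0 : Eucl n) 1) (l : ℝ) {p : Eucl n}
    (hp : p ∈ frontier (wulff K E Ω l)) :
    p ∈ wulff K E Ω l ∧ ∃ u : Eucl n, u ≠ 0 ∧
      (inner ℝ p u : ℝ) = suppFn K u + l * suppFn E u ∧
      wulff K E Ω l ⊆ halfspace u (suppFn K u + l * suppFn E u) := by
  set c : Eucl n → ℝ := fun u => suppFn K u + l * suppFn E u with hc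
  have hclosed := wulff_isClosed K E Ω l
  rw [frontier, hclosed.closure_eq] at hp
  obtain ⟨hpW, hpint⟩ := hp
  have hmemW : ∀ x ∈ wulff K E Ω l, ∀ u ∈ Ω, (inner ℝ x u : ℝ) ≤ c u := by
    intro x hx u hu
    exact Set.mem_iInter₂.1 hx u hu
  have hseq : ∀ k : ℕ, ∃ u, u ∈ Ω ∧ c u - ((k : ℝ) + 1)⁻¹ < (inner ℝ p u : ℝ) := by
    intro k
    have hball : ¬ ball p ((k : ℝ) + 1)⁻¹ ⊆ wulff K E Ω l := by
      intro hsub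
      exact hpint (mem_interior_iff_mem_nhds.2
        (Filter.mem_of_superset (ball_mem_nhds p (by positivity)) hsub))
    obtain ⟨q, hq1, hq2⟩ := Set.not_subset.1 hball
    have hqex : ∃ u ∈ Ω, ¬ ((inner ℝ q u : ℝ) ≤ c u) := by
      by_contra h
      push_neg at h
      exact hq2 (Set.mem_iInter₂.2 fun u hu => h u hu)
    obtain ⟨u, huΩ, hqu⟩ := hqex
    push_neg at hqu
    refine ⟨u, huΩ, ?_⟩
    have hnorm : ‖u‖ = 1 := by simpa using hΩ huΩ
    have h1 : (inner ℝ (q - p) u : ℝ) ≤ ‖q - p‖ * ‖u‖ := real_inner_le_norm _ _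
    have h2 : ‖q - p‖ < ((k : ℝ) + 1)⁻¹ := by
      rw [← dist_eq_norm]; exact mem_ball.1 hq1
    have h3 : (inner ℝ (q - p) u : ℝ) = inner ℝ q u - inner ℝ p u := inner_sub_left _ _ _
    rw [hnorm, mul_one] at h1
    simp only [hc]
    have h5 : (inner ℝ p u : ℝ) = inner ℝ q u - inner ℝ (q - p) u := by linarith
    have h6 : c u = suppFn K u + l * suppFn E u := rfl
    linarith
  choose u huΩ hu using hseq
  obtain ⟨a, haS, φ, hφ, hconv⟩ :=
    (isCompact_sphere (0 : Eucl n) 1).tendsto_subseq (fun k => hΩ (huΩ k))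
  have hanorm : ‖a‖ = 1 := by simpa using haS
  have ha0 : a ≠ 0 := by
    intro h; rw [h] at hanorm; simp at hanorm
  have hcl : Tendsto (fun k => c (u (φ k))) atTop (𝓝 (c a)) := by
    exact (suppFn_tendsto hK hKne hconv).add ((suppFn_tendsto hE hEne hconv).const_mul l)
  have heps : Tendsto (fun k => ((φ k : ℝ) + 1)⁻¹) atTop (𝓝 0) := by
    have h1 : Tendsto (fun m : ℕ => ((m : ℝ) + 1)⁻¹) atTop (𝓝 0) := by
      simpa [one_div] using tendsto_one_div_add_atTop_nhds_zero_nat (𝕜 := ℝ)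
    exact h1.comp hφ.tendsto_atTop
  have hinner : ∀ x : Eucl n,
      Tendsto (fun k => (inner ℝ x (u (φ k)) : ℝ)) atTop (𝓝 (inner ℝ x a)) := by
    intro x
    exact ((continuous_const.inner continuous_id).tendsto a).comp hconv
  have hle : (inner ℝ p a : ℝ) ≤ c a :=
    le_of_tendsto_of_tendsto' (hinner p) hcl fun k => hmemW p hpW _ (huΩ (φ k))
  have hge : c a ≤ (inner ℝ p a : ℝ) := by
    have h := le_of_tendsto_of_tendsto' (hcl.sub heps) (hinner p)
      (fun k => (hu (φ k)).le)
    simpa using h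
  refine ⟨hpW, a, ha0, le_antisymm hle hge, ?_⟩
  intro x hx
  exact le_of_tendsto_of_tendsto' (hinner x) hcl fun k => hmemW x hx _ (huΩ (φ k))

end Aux

/-- For Ω₁ ⊆ Ω₂ both determining K and λ > 0, K(Ω₁,λ) and K(Ω₂,λ)
are tangential bodies of K + λ•E, and K(Ω₁,λ) is a tangential body of K(Ω₂,λ). -/
theorem statement17 {n : ℕ} (K E : Set (Eucl n))
    (hKcomp : IsCompact K) (hKconv : Convex ℝ K) (hKint : (interior K).Nonempty)
    (hEcomp : IsCompact E) (hEconv : Convex ℝ E) (hEint : (interior E).Nonempty)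
    (Ω₁ Ω₂ : Set (Eucl n)) (hΩsub : Ω₁ ⊆ Ω₂) (hΩsph : Ω₂ ⊆ sphere (0 : Eucl n) 1)
    (hΩ₁det : Determines Ω₁ K) (hΩ₂det : Determines Ω₂ K)
    (l : ℝ) (hl : 0 < l) :
    IsTangentialBody (wulff K E Ω₁ l) (K + l • E) ∧
      IsTangentialBody (wulff K E Ω₂ l) (K + l • E) ∧
        IsTangentialBody (wulff K E Ω₁ l) (wulff K E Ω₂ l) := by
  have hKne : K.Nonempty := hKint.mono interior_subset
  have hEne : E.Nonempty := hEint.mono interior_subset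
  have hΩ₁sph : Ω₁ ⊆ sphere (0 : Eucl n) 1 := hΩsub.trans hΩsph
  have hupper : ∀ u : Eucl n, ∀ z ∈ K + l • E,
      (inner ℝ z u : ℝ) ≤ suppFn K u + l * suppFn E u := by
    intro u z hz
    obtain ⟨x, hx, y, hy, rfl⟩ := Set.mem_add.1 hz
    obtain ⟨e, he, rfl⟩ := hy
    have h1 := suppFn_le hKcomp hx u
    have h2 := suppFn_le hEcomp he u
    have h3 : (inner ℝ (x + l • e) u : ℝ) = inner ℝ x u + l * inner ℝ e u := by
      rw [inner_add_left, real_inner_smul_left]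
    have h4 : l * (inner ℝ e u : ℝ) ≤ l * suppFn E u :=
      mul_le_mul_of_nonneg_left h2 hl.le
    linarith
  have hattain : ∀ u : Eucl n, ∃ z ∈ K + l • E,
      (inner ℝ z u : ℝ) = suppFn K u + l * suppFn E u := by
    intro u
    obtain ⟨x, hx, hx2⟩ := suppFn_exists hKcomp hKne u
    obtain ⟨e, he, he2⟩ := suppFn_exists hEcomp hEne u
    refine ⟨x + l • e, Set.add_mem_add hx (Set.smul_mem_smul_set he), ?_⟩
    rw [inner_add_left, real_inner_smul_left, hx2, he2]
  have hsub1 : ∀ Ω : Set (Eucl n), K + l • E ⊆ wulff K E Ω l := by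
    intro Ω z hz
    exact Set.mem_iInter₂.2 fun u _ => hupper u z hz
  have hsub2 : wulff K E Ω₂ l ⊆ wulff K E Ω₁ l := fun x hx =>
    Set.mem_iInter₂.2 fun u hu => Set.mem_iInter₂.1 hx u (hΩsub hu)
  refine ⟨⟨hsub1 Ω₁, ?_⟩, ⟨hsub1 Ω₂, ?_⟩, ⟨hsub2, ?_⟩⟩
  · intro p hp
    obtain ⟨hpW, a, ha0, heq, hsubset⟩ :=
      wulff_frontier_exists K E hKcomp hKne hEcomp hEne Ω₁ hΩ₁sph l hp
    obtain ⟨z, hz, hz2⟩ := hattain a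
    exact ⟨a, ha0, suppFn K a + l * suppFn E a, heq,
      ⟨⟨p, hpW, heq⟩, Or.inl hsubset⟩,
      ⟨⟨z, hz, hz2⟩, Or.inl fun w hw => hupper a w hw⟩⟩
  · intro p hp
    obtain ⟨hpW, a, ha0, heq, hsubset⟩ :=
      wulff_frontier_exists K E hKcomp hKne hEcomp hEne Ω₂ hΩsph l hp
    obtain ⟨z, hz, hz2⟩ := hattain a
    exact ⟨a, ha0, suppFn K a + l * suppFn E a, heq,
      ⟨⟨p, hpW, heq⟩, Or.inl hsubset⟩,
      ⟨⟨z, hz, hz2⟩, Or.inl fun w hw => hupper a w hw⟩⟩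
  · intro p hp
    obtain ⟨hpW, a, ha0, heq, hsubset⟩ :=
      wulff_frontier_exists K E hKcomp hKne hEcomp hEne Ω₁ hΩ₁sph l hp
    obtain ⟨z, hz, hz2⟩ := hattain a
    exact ⟨a, ha0, suppFn K a + l * suppFn E a, heq,
      ⟨⟨p, hpW, heq⟩, Or.inl hsubset⟩,
      ⟨⟨z, hsub1 Ω₂ hz, hz2⟩, Or.inl fun w hw => hsubset (hsub2 hw)⟩⟩
end

section
/- Let K and E be full-dimensional convex bodies in ℝⁿ and let Ω ⊆ S^{n−1} determine K, with the convex hull of Ω containing the origin in its interior. Then, in the Hausdorff metric, (1/λ)·K_λ converges to E as λ → ∞, and (1/λ)·K(Ω,λ) converges to E^Ω as λ → ∞. -/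
open scoped Pointwise RealInnerProductSpace
open Metric MeasureTheory

/-- Upper bound on the support function of a set in a closed ball. -/
lemma suppFn_le_of_subset {n : ℕ} {K : Set (Eucl n)} {R : ℝ} (hR : 0 ≤ R)
    (hK : K ⊆ Metric.closedBall 0 R) {u : Eucl n} (hu : ‖u‖ = 1) :
    suppFn K u ≤ R := by
  apply Real.sSup_le _ hR
  rintro y ⟨x, hx, rfl⟩
  have hxR : ‖x‖ ≤ R := by
    have := hK hx; rwa [Metric.mem_closedBall, dist_zero_right] at this
  calc (inner ℝ x u : ℝ) ≤ ‖x‖ * ‖u‖ := real_inner_le_norm x u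
    _ ≤ R := by rw [hu, mul_one]; exact hxR

/-- Lower bound on the support function via a point of the set. -/
lemma le_suppFn_of_mem {n : ℕ} {K : Set (Eucl n)} {R : ℝ}
    (hK : K ⊆ Metric.closedBall 0 R) {x u : Eucl n} (hx : x ∈ K) :
    (inner ℝ x u : ℝ) ≤ suppFn K u := by
  apply le_csSup
  · refine ⟨R * ‖u‖, ?_⟩
    rintro y ⟨w, hw, rfl⟩
    have hwR : ‖w‖ ≤ R := by
      have := hK hw; rwa [Metric.mem_closedBall, dist_zero_right] at this
    calc (inner ℝ w u : ℝ) ≤ ‖w‖ * ‖u‖ := real_inner_le_norm w u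
      _ ≤ R * ‖u‖ := by gcongr
  · exact ⟨x, hx, rfl⟩

/-- If a ball around the origin is contained in the convex hull of Ω, then common
halfspace bounds over Ω bound the norm. -/
lemma norm_le_of_halfspaces {n : ℕ} {Ω : Set (Eucl n)} {δ : ℝ} (hδ : 0 < δ)
    (hball : Metric.closedBall (0 : Eucl n) δ ⊆ convexHull ℝ Ω)
    {C : ℝ} (hC : 0 ≤ C) {x : Eucl n} (hx : ∀ u ∈ Ω, (inner ℝ x u : ℝ) ≤ C) :
    ‖x‖ ≤ C / δ := by
  rcases eq_or_ne x 0 with rfl | hx0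
  · simpa using div_nonneg hC hδ.le
  · have hxn : 0 < ‖x‖ := norm_pos_iff.mpr hx0
    set v : Eucl n := (δ / ‖x‖) • x with hv
    have hvmem : v ∈ convexHull ℝ Ω := by
      apply hball
      rw [Metric.mem_closedBall, dist_zero_right, hv, norm_smul, Real.norm_eq_abs,
        abs_of_nonneg (by positivity)]
      rw [div_mul_cancel₀ _ hxn.ne']
    have hsub : convexHull ℝ Ω ⊆ {y : Eucl n | (inner ℝ x y : ℝ) ≤ C} := by
      apply convexHull_min
      · intro u hu
        exact hx u hu
      · exact convex_halfSpace_le (innerSL ℝ x).toLinearMap.isLinear C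
    have hvC := hsub hvmem
    rw [Set.mem_setOf_eq, hv, real_inner_smul_right, real_inner_self_eq_norm_sq] at hvC
    rw [le_div_iff₀ hδ]
    nlinarith [hvC, div_mul_cancel₀ δ hxn.ne']

/-- Membership in the rescaled Wulff shape. -/
lemma mem_smul_wulff {n : ℕ} {K E Ω : Set (Eucl n)} {l : ℝ} (hl : 0 < l) {y : Eucl n} :
    y ∈ l⁻¹ • wulff K E Ω l ↔
      ∀ u ∈ Ω, (inner ℝ y u : ℝ) ≤ l⁻¹ * suppFn K u + suppFn E u := by
  rw [Set.mem_smul_set_iff_inv_smul_mem₀ (inv_ne_zero hl.ne'), inv_inv]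
  simp only [wulff, Set.mem_iInter, halfspace, Set.mem_setOf_eq, real_inner_smul_left]
  refine forall₂_congr fun u hu => ?_
  rw [show l⁻¹ * suppFn K u + suppFn E u = (suppFn K u + l * suppFn E u) / l by
    field_simp, le_div_iff₀ hl, mul_comm]

/-- A squeeze lemma: if eventually `f l ≤ C / l` (in `ℝ≥0∞`), then `f → 0` at infinity. -/
lemma tendsto_of_ofReal_div_bound {f : ℝ → ENNReal} {C : ℝ}
    (h : ∀ᶠ l in Filter.atTop, f l ≤ ENNReal.ofReal (C / l)) :
    Filter.Tendsto f Filter.atTop (nhds 0) := by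
  have h1 : Filter.Tendsto (fun l : ℝ => ENNReal.ofReal (C / l)) Filter.atTop (nhds 0) := by
    rw [← ENNReal.ofReal_zero]
    apply ENNReal.tendsto_ofReal
    have := tendsto_inv_atTop_zero.const_mul C; simp only [mul_zero] at this
    exact this.congr fun x => (div_eq_mul_inv C x).symm
  exact tendsto_of_tendsto_of_tendsto_of_le_of_le' tendsto_const_nhds h1
    (Filter.Eventually.of_forall fun _ => zero_le) h

/-- In the Hausdorff metric, (1/λ)•K_λ → E and (1/λ)•K(Ω,λ) → E^Ω
as λ → ∞. -/
theorem statement18 {n : ℕ} (K E : Set (Eucl n))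
    (hKcomp : IsCompact K) (hKconv : Convex ℝ K) (hKint : (interior K).Nonempty)
    (hEcomp : IsCompact E) (hEconv : Convex ℝ E) (hEint : (interior E).Nonempty)
    (Ω : Set (Eucl n)) (hΩsph : Ω ⊆ sphere (0 : Eucl n) 1) (hΩdet : Determines Ω K)
    (hΩhull : (0 : Eucl n) ∈ interior (convexHull ℝ Ω)) :
    Filter.Tendsto (fun l : ℝ => EMetric.hausdorffEdist (l⁻¹ • parallelBody K E l) E)
        Filter.atTop (nhds 0) ∧
      Filter.Tendsto (fun l : ℝ => EMetric.hausdorffEdist (l⁻¹ • wulff K E Ω l) (tangBody E Ω))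
        Filter.atTop (nhds 0) := by
  
  obtain ⟨x0, hx0i⟩ := hKint
  have hx0K : x0 ∈ K := interior_subset hx0i
  obtain ⟨z, hz⟩ := hEint
  obtain ⟨ρ, hρ, hzρ⟩ : ∃ ρ > 0, Metric.closedBall z ρ ⊆ E := by
    rcases Metric.isOpen_iff.mp isOpen_interior z hz with ⟨ε, hε, hballz⟩
    exact ⟨ε / 2, by positivity, fun w hw => interior_subset
      (hballz (Metric.closedBall_subset_ball (half_lt_self hε) hw))⟩
  have hzE : z ∈ E := hzρ (Metric.mem_closedBall_self hρ.le)
  obtain ⟨RK0, hRK0⟩ := hKcomp.isBounded.subset_closedBall 0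
  obtain ⟨RE0, hRE0⟩ := hEcomp.isBounded.subset_closedBall 0
  set RK : ℝ := max RK0 0 with hRKdef
  set RE : ℝ := max RE0 0 with hREdef
  have hRK : K ⊆ Metric.closedBall 0 RK :=
    hRK0.trans (Metric.closedBall_subset_closedBall (le_max_left _ _))
  have hRE : E ⊆ Metric.closedBall 0 RE :=
    hRE0.trans (Metric.closedBall_subset_closedBall (le_max_left _ _))
  have hRKnn : (0:ℝ) ≤ RK := le_max_right _ _
  have hREnn : (0:ℝ) ≤ RE := le_max_right _ _
  obtain ⟨δ, hδ, hballΩ⟩ : ∃ δ > 0, Metric.closedBall (0 : Eucl n) δ ⊆ convexHull ℝ Ω := by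
    rcases Metric.isOpen_iff.mp isOpen_interior 0 hΩhull with ⟨ε, hε, hballz⟩
    exact ⟨ε / 2, by positivity, fun w hw => interior_subset
      (hballz (Metric.closedBall_subset_ball (half_lt_self hε) hw))⟩
  have hx0RK : ‖x0‖ ≤ RK := by
    have := hRK hx0K; rwa [Metric.mem_closedBall, dist_zero_right] at this
  constructor
  · -- Part 1
    apply tendsto_of_ofReal_div_bound (C := RK)
    filter_upwards [Filter.eventually_gt_atTop 0] with l hl
    have hpar : parallelBody K E l = K + l • E := by
      rw [parallelBody, if_neg (not_le.mpr hl)]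
    rw [hpar]
    apply EMetric.hausdorffEdist_le_of_mem_edist
    · rintro a ha
      rw [Set.mem_smul_set] at ha
      obtain ⟨b, hb, rfl⟩ := ha
      rw [Set.mem_add] at hb
      obtain ⟨k, hk, e', he', hsum⟩ := hb
      rw [Set.mem_smul_set] at he'
      obtain ⟨e, he, rfl⟩ := he'
      refine ⟨e, he, ?_⟩
      rw [edist_dist]
      apply ENNReal.ofReal_le_ofReal
      have hdiff : l⁻¹ • b - e = l⁻¹ • k := by
        rw [← hsum, smul_add, smul_smul, inv_mul_cancel₀ hl.ne', one_smul,
          add_sub_cancel_right]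
      have hkR : ‖k‖ ≤ RK := by
        have := hRK hk; rwa [Metric.mem_closedBall, dist_zero_right] at this
      rw [dist_eq_norm, hdiff, norm_smul, norm_inv, Real.norm_eq_abs, abs_of_pos hl,
        div_eq_inv_mul]
      gcongr
    · intro e he
      refine ⟨l⁻¹ • x0 + e, ?_, ?_⟩
      · rw [Set.mem_smul_set]
        refine ⟨x0 + l • e, Set.add_mem_add hx0K (Set.smul_mem_smul_set he), ?_⟩
        rw [smul_add, smul_smul, inv_mul_cancel₀ hl.ne', one_smul]
      · rw [edist_dist]
        apply ENNReal.ofReal_le_ofReal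
        rw [dist_eq_norm, show e - (l⁻¹ • x0 + e) = -(l⁻¹ • x0) from by abel, norm_neg, norm_smul, norm_inv,
          Real.norm_eq_abs, abs_of_pos hl, div_eq_inv_mul]
        gcongr
  · -- Part 2
    set D : ℝ := (RK + RE) / δ + ‖z‖ with hDdef
    have hDnn : 0 ≤ D := by positivity
    set C : ℝ := max ‖x0‖ (RK * D / ρ) with hCdef
    have hCnn : 0 ≤ C := le_trans (norm_nonneg _) (le_max_left _ _)
    apply tendsto_of_ofReal_div_bound (C := C)
    filter_upwards [Filter.eventually_ge_atTop 1] with l hl1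
    have hl : 0 < l := lt_of_lt_of_le one_pos hl1
    have hlinv : (0:ℝ) ≤ l⁻¹ := by positivity
    have hlinv1 : l⁻¹ ≤ 1 := by
      rw [inv_le_one_iff₀]; right; exact hl1
    apply EMetric.hausdorffEdist_le_of_mem_edist
    · intro y hy
      rw [mem_smul_wulff hl] at hy
      have hyb : ‖y‖ ≤ (RK + RE) / δ := by
        apply norm_le_of_halfspaces hδ hballΩ (by positivity)
        intro u hu
        have hu1 : ‖u‖ = 1 := by
          have := hΩsph hu; rwa [mem_sphere_iff_norm, sub_zero] at this
        have h1 : suppFn K u ≤ RK := suppFn_le_of_subset hRKnn hRK hu1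
        have h2 : suppFn E u ≤ RE := suppFn_le_of_subset hREnn hRE hu1
        have := hy u hu
        nlinarith [mul_le_mul_of_nonneg_left h1 hlinv,
          mul_le_mul_of_nonneg_right hlinv1 hRKnn]
      set c : ℝ := l⁻¹ * RK with hcdef
      have hcnn : 0 ≤ c := by positivity
      set θ : ℝ := ρ / (ρ + c) with hθdef
      have hρc : 0 < ρ + c := by linarith
      have hθnn : 0 ≤ θ := by positivity
      have hθ1 : θ ≤ 1 := by
        rw [hθdef, div_le_one hρc]; linarith
      have hθeq : θ * (ρ + c) = ρ := div_mul_cancel₀ ρ hρc.ne'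
      refine ⟨z + θ • (y - z), ?_, ?_⟩
      · simp only [tangBody, Set.mem_iInter, halfspace, Set.mem_setOf_eq]
        intro u hu
        have hu1 : ‖u‖ = 1 := by
          have := hΩsph hu; rwa [mem_sphere_iff_norm, sub_zero] at this
        have hKle : suppFn K u ≤ RK := suppFn_le_of_subset hRKnn hRK hu1
        have hzu : (inner ℝ z u : ℝ) + ρ ≤ suppFn E u := by
          have hmem : z + ρ • u ∈ E := by
            apply hzρ
            rw [Metric.mem_closedBall, dist_eq_norm, add_sub_cancel_left, norm_smul,
              Real.norm_eq_abs, abs_of_pos hρ, hu1, mul_one]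
          have := le_suppFn_of_mem (u := u) hRE hmem
          rwa [inner_add_left, real_inner_smul_left, real_inner_self_eq_norm_sq, hu1,
            one_pow, mul_one] at this
        have hyu : (inner ℝ y u : ℝ) ≤ l⁻¹ * suppFn K u + suppFn E u := hy u hu
        have hyu' : (inner ℝ y u : ℝ) ≤ c + suppFn E u := by
          have hmm : l⁻¹ * suppFn K u ≤ c := by
            rw [hcdef]; exact mul_le_mul_of_nonneg_left hKle hlinv
          linarith
        rw [inner_add_left, real_inner_smul_left, inner_sub_left]
        nlinarith [mul_le_mul_of_nonneg_left (sub_le_sub_right hyu' (inner ℝ z u : ℝ)) hθnn,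
          mul_nonneg (sub_nonneg.mpr hθ1)
            (by linarith : (0:ℝ) ≤ suppFn E u - (inner ℝ z u : ℝ) - ρ)]
      · rw [edist_dist]
        apply ENNReal.ofReal_le_ofReal
        have hdiff : y - (z + θ • (y - z)) = (1 - θ) • (y - z) := by
          rw [sub_smul, one_smul]; abel
        rw [dist_eq_norm, hdiff, norm_smul, Real.norm_eq_abs, abs_of_nonneg (by linarith)]
        have h1θ : 1 - θ ≤ c / ρ := by
          have heq : 1 - θ = c / (ρ + c) := by
            rw [hθdef]; field_simp; ring
          rw [heq]
          exact div_le_div_of_nonneg_left hcnn hρ (by linarith)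
        have hyz : ‖y - z‖ ≤ D := by
          calc ‖y - z‖ ≤ ‖y‖ + ‖z‖ := norm_sub_le _ _
            _ ≤ D := by rw [hDdef]; linarith
        calc (1 - θ) * ‖y - z‖ ≤ (c / ρ) * D := by
              apply mul_le_mul h1θ hyz (norm_nonneg _) (by positivity)
          _ = (RK * D / ρ) / l := by rw [hcdef]; ring
          _ ≤ C / l := by gcongr; exact le_max_right _ _
    · intro x hxW
      simp only [tangBody, Set.mem_iInter, halfspace, Set.mem_setOf_eq] at hxW
      refine ⟨l⁻¹ • x0 + x, ?_, ?_⟩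
      · rw [mem_smul_wulff hl]
        intro u hu
        rw [inner_add_left, real_inner_smul_left]
        have h1 : (inner ℝ x0 u : ℝ) ≤ suppFn K u := le_suppFn_of_mem hRK hx0K
        have h2 := hxW u hu
        have h3 := mul_le_mul_of_nonneg_left h1 hlinv
        linarith
      · rw [edist_dist]
        apply ENNReal.ofReal_le_ofReal
        rw [dist_eq_norm, sub_add_cancel_right, norm_neg, norm_smul, norm_inv,
          Real.norm_eq_abs, abs_of_pos hl, div_eq_inv_mul]
        gcongr
        exact le_max_left _ _
end
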